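/- arXiv:1806.06808 — 9 statements merged into one kernel-verified Lean document; each statement's English description precedes it below -/
import Mathlib

section
/- Let n ≥ 1 and let A ∈ ℝ^{n×n} be the tridiagonal matrix with diagonal entries a_C, subdiagonal entries −a_W and superdiagonal entries −a_E, where a_W = d h⁻² B(−P), a_E = d h⁻² B(P), a_C = a_W + a_E, with d = ε + μb > 0, b > 0, h > 0 and P = bh/d. Then A is invertible and all entries of A⁻¹ are nonnegative (i.e., A is an M-matrix of monotone type); in particular the complete flux scheme linear system A φ = B s + b has a unique solution for every right-hand side. -/
/-- Bernoulli function `B(z) = z / (e^z − 1)`. -/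
noncomputable def Bern (z : ℝ) : ℝ := z / (Real.exp z - 1)

/-- The tridiagonal complete flux scheme matrix with diagonal `a_C`,
subdiagonal `−a_W` and superdiagonal `−a_E`, where
`a_W = d h⁻² B(−P)`, `a_E = d h⁻² B(P)`, `a_C = a_W + a_E`, `P = b h / d`. -/
noncomputable def cfsMatrix (b d h : ℝ) (n : ℕ) : Matrix (Fin n) (Fin n) ℝ :=
  Matrix.of fun i j =>
    if (i : ℕ) = (j : ℕ) then d / h ^ 2 * Bern (-(b * h / d)) + d / h ^ 2 * Bern (b * h / d)
    else if (i : ℕ) = (j : ℕ) + 1 then -(d / h ^ 2 * Bern (-(b * h / d)))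
    else if (i : ℕ) + 1 = (j : ℕ) then -(d / h ^ 2 * Bern (b * h / d))
    else 0

/-- Discrete Green's function for the tridiagonal matrix with diagonal `1+r`,
subdiagonal `-r`, superdiagonal `-1`, with rows/columns indexed `1..m-1`. -/
noncomputable def cfsGreen (r : ℝ) (m i k : ℕ) : ℝ :=
  (r ^ min i k - 1) * (r ^ m - r ^ max i k) / ((r - 1) * r ^ k * (r ^ m - 1))

lemma cfsGreen_zero (r : ℝ) (m k : ℕ) : cfsGreen r m 0 k = 0 := by
  simp [cfsGreen]

lemma cfsGreen_top (r : ℝ) (m k : ℕ) (hk : k ≤ m) : cfsGreen r m m k = 0 := by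
  simp [cfsGreen, max_eq_left hk]

lemma cfsGreen_row (r : ℝ) (hr : 1 < r) (m i k : ℕ) (him : i + 2 ≤ m)
    (hk1 : 1 ≤ k) (hkm : k < m) :
    -(r * cfsGreen r m i k) + (1 + r) * cfsGreen r m (i + 1) k - cfsGreen r m (i + 2) k
      = if i + 1 = k then 1 else 0 := by
  have hr0 : (0:ℝ) < r := by linarith
  have hrne : r ≠ 0 := ne_of_gt hr0
  have h1 : r - 1 ≠ 0 := by intro h; nlinarith
  have hm : r ^ m - 1 ≠ 0 := by
    have : 1 < r ^ m := one_lt_pow₀ hr (by omega)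
    intro h; nlinarith
  have hkne : r ^ k ≠ 0 := pow_ne_zero _ hrne
  rcases lt_trichotomy (i+1) k with hlt | heq | hgt
  · rw [if_neg (by omega)]
    unfold cfsGreen
    rw [min_eq_left (by omega), min_eq_left (by omega), min_eq_left (by omega),
      max_eq_right (by omega), max_eq_right (by omega), max_eq_right (by omega)]
    field_simp
    ring
  · rw [if_pos heq]
    subst heq
    unfold cfsGreen
    rw [min_eq_left (by omega), min_eq_right (by omega), min_eq_right (by omega),
      max_eq_right (by omega), max_eq_left (by omega), max_eq_left (by omega)]
    field_simp
    ring
  · rw [if_neg (by omega)]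
    unfold cfsGreen
    rw [min_eq_right (by omega), min_eq_right (by omega), min_eq_right (by omega),
      max_eq_left (by omega), max_eq_left (by omega), max_eq_left (by omega)]
    field_simp
    ring

lemma Bern_pos' {z : ℝ} (hz : 0 < z) : 0 < z / (Real.exp z - 1) := by
  have : 1 < Real.exp z := by
    calc (1:ℝ) = Real.exp 0 := Real.exp_zero.symm
    _ < Real.exp z := Real.exp_lt_exp.mpr hz
  exact div_pos hz (by linarith)

lemma Bern_neg' {z : ℝ} (hz : 0 < z) :
    -z / (Real.exp (-z) - 1) = Real.exp z * (z / (Real.exp z - 1)) := by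
  have h1 : 1 < Real.exp z := by
    calc (1:ℝ) = Real.exp 0 := Real.exp_zero.symm
    _ < Real.exp z := Real.exp_lt_exp.mpr hz
  have h2 : Real.exp (-z) - 1 ≠ 0 := by
    have : Real.exp (-z) < 1 := by
      calc Real.exp (-z) < Real.exp 0 := Real.exp_lt_exp.mpr (by linarith)
      _ = 1 := Real.exp_zero
    linarith
  have h3 : Real.exp z - 1 ≠ 0 := by linarith
  rw [Real.exp_neg] at h2 ⊢
  have h4 : Real.exp z ≠ 0 := Real.exp_ne_zero z
  have key : (Real.exp z)⁻¹ - 1 = -((Real.exp z - 1) / Real.exp z) := by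
    field_simp
    ring
  rw [key]
  rw [div_neg, div_div_eq_mul_div]
  ring

lemma sum_diag (n : ℕ) (c : ℕ → ℝ) (p : ℕ) (hp : p < n) :
    ∑ j ∈ Finset.range n, (if p = j then c j else 0) = c p := by
  rw [Finset.sum_ite_eq]
  exact if_pos (Finset.mem_range.mpr hp)

lemma sum_sub (n : ℕ) (c : ℕ → ℝ) (p : ℕ) (hp : p < n) (h0 : c 0 = 0) :
    ∑ j ∈ Finset.range n, (if p = j + 1 then c (j + 1) else 0) = c p := by
  cases p with
  | zero =>
    rw [Finset.sum_eq_zero, h0]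
    intro j _; rw [if_neg (by omega)]
  | succ q =>
    have he : ∀ j ∈ Finset.range n, (if q + 1 = j + 1 then c (j+1) else 0)
        = if q = j then c (j+1) else 0 := by
      intro j _
      by_cases h : q = j
      · rw [if_pos (by omega), if_pos h]
      · rw [if_neg (by omega), if_neg h]
    rw [Finset.sum_congr rfl he, Finset.sum_ite_eq, if_pos (Finset.mem_range.mpr (by omega))]

lemma sum_super (n : ℕ) (c : ℕ → ℝ) (p : ℕ) (hp : p < n) (hn : c (n + 1) = 0) :
    ∑ j ∈ Finset.range n, (if p + 1 = j then c (j + 1) else 0) = c (p + 2) := by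
  rw [Finset.sum_ite_eq]
  by_cases h : p + 1 < n
  · rw [if_pos (Finset.mem_range.mpr h)]
  · rw [if_neg (by simp; omega)]
    have : p + 1 = n := by omega
    rw [show p + 2 = n + 1 by omega, hn]


lemma cfsGreen_nonneg (r : ℝ) (hr : 1 < r) (m i k : ℕ) (hik : max i k ≤ m) :
    0 ≤ cfsGreen r m i k := by
  have hr1 : (1:ℝ) ≤ r := hr.le
  have h1 : (1:ℝ) ≤ r ^ min i k := one_le_pow₀ hr1
  have h2 : r ^ max i k ≤ r ^ m := pow_le_pow_right₀ hr1 hik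
  have h3 : (1:ℝ) ≤ r ^ k := one_le_pow₀ hr1
  have h4 : (1:ℝ) ≤ r ^ m := one_le_pow₀ hr1
  unfold cfsGreen
  apply div_nonneg
  · apply mul_nonneg <;> linarith
  · apply mul_nonneg
    apply mul_nonneg <;> linarith
    linarith

/-- the complete flux scheme matrix is invertible, its inverse has
nonnegative entries (M-matrix of monotone type), and the linear system
`A φ = rhs` has a unique solution for every right-hand side. -/

theorem cfs_matrix_M_matrix (b d h : ℝ) (hb : 0 < b) (hd : 0 < d) (hh : 0 < h)
    (n : ℕ) (hn : 1 ≤ n) :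
    IsUnit (cfsMatrix b d h n) ∧
    (∀ i j : Fin n, 0 ≤ (cfsMatrix b d h n)⁻¹ i j) ∧
    (∀ rhs : Fin n → ℝ, ∃! φv : Fin n → ℝ, (cfsMatrix b d h n).mulVec φv = rhs) := by
  have hP : 0 < b * h / d := div_pos (mul_pos hb hh) hd
  obtain ⟨r, hrdef⟩ : ∃ x : ℝ, x = Real.exp (b * h / d) := ⟨_, rfl⟩
  have hr : 1 < r := by
    rw [hrdef]
    calc (1:ℝ) = Real.exp 0 := Real.exp_zero.symm
    _ < _ := Real.exp_lt_exp.mpr hP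
  have hrne : r ≠ 0 := by linarith
  obtain ⟨aE, haEdef⟩ : ∃ x : ℝ, x = d / h ^ 2 * Bern (b * h / d) := ⟨_, rfl⟩
  have haE : 0 < aE := by
    rw [haEdef]
    exact mul_pos (div_pos hd (by positivity)) (Bern_pos' hP)
  have haEne : aE ≠ 0 := ne_of_gt haE
  have hE : d / h ^ 2 * Bern (b * h / d) = aE := haEdef.symm
  have hW : d / h ^ 2 * Bern (-(b * h / d)) = r * aE := by
    rw [haEdef, hrdef]
    unfold Bern
    rw [Bern_neg' hP]
    ring
  set A := cfsMatrix b d h n with hA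
  set H : Matrix (Fin n) (Fin n) ℝ :=
    Matrix.of (fun i k : Fin n => cfsGreen r (n+1) ((i:ℕ)+1) ((k:ℕ)+1) / aE) with hH
  have hAH : A * H = 1 := by
    ext i k
    rw [Matrix.mul_apply, Matrix.one_apply]
    have hstep : ∀ j : Fin n, A i j * H j k =
        (if (i:ℕ) = (j:ℕ) then (1+r) * cfsGreen r (n+1) ((j:ℕ)+1) ((k:ℕ)+1) else 0)
      + (if (i:ℕ) = (j:ℕ)+1 then -(r * cfsGreen r (n+1) ((j:ℕ)+1) ((k:ℕ)+1)) else 0)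
      + (if (i:ℕ)+1 = (j:ℕ) then -(cfsGreen r (n+1) ((j:ℕ)+1) ((k:ℕ)+1)) else 0) := by
      intro j
      rw [hA, hH]
      simp only [cfsMatrix, Matrix.of_apply]
      rw [hW, hE]
      split_ifs <;>
        first
          | omega
          | (field_simp; try ring)
          | simp
    rw [Finset.sum_congr rfl (fun j _ => hstep j)]
    rw [Fin.sum_univ_eq_sum_range (fun jv =>
        (if (i:ℕ) = jv then (1+r) * cfsGreen r (n+1) (jv+1) ((k:ℕ)+1) else 0)
      + (if (i:ℕ) = jv+1 then -(r * cfsGreen r (n+1) (jv+1) ((k:ℕ)+1)) else 0)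
      + (if (i:ℕ)+1 = jv then -(cfsGreen r (n+1) (jv+1) ((k:ℕ)+1)) else 0)) n]
    rw [Finset.sum_add_distrib, Finset.sum_add_distrib]
    rw [sum_diag n (fun jv => (1+r) * cfsGreen r (n+1) (jv+1) ((k:ℕ)+1)) (i:ℕ) i.isLt]
    rw [sum_sub n (fun jv => -(r * cfsGreen r (n+1) jv ((k:ℕ)+1))) (i:ℕ) i.isLt
      (by simp [cfsGreen_zero])]
    rw [sum_super n (fun jv => -(cfsGreen r (n+1) jv ((k:ℕ)+1))) (i:ℕ) i.isLt
      (by simp [cfsGreen_top r (n+1) ((k:ℕ)+1) (by omega)])]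
    have hrow := cfsGreen_row r hr (n+1) (i:ℕ) ((k:ℕ)+1) (by omega) (by omega)
      (by omega)
    have hiff : ((i:ℕ) + 1 = (k:ℕ) + 1) ↔ (i = k) := by
      rw [Fin.ext_iff]; omega
    rw [show (i:ℕ)+1+1 = (i:ℕ)+2 by omega]
    by_cases hik : i = k
    · rw [if_pos hik]
      rw [if_pos (hiff.mpr hik)] at hrow
      linarith [hrow]
    · rw [if_neg hik]
      rw [if_neg (fun hc => hik (hiff.mp hc))] at hrow
      linarith [hrow]
  have hGA : H * A = 1 := mul_eq_one_comm.mp hAH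
  have hU : IsUnit A :=
    (Matrix.isUnit_iff_isUnit_det A).mpr (Matrix.isUnit_det_of_right_inverse hAH)
  have hinv : A⁻¹ = H := Matrix.inv_eq_right_inv hAH
  refine ⟨hU, ?_, ?_⟩
  · intro i j
    rw [hinv, hH]
    exact div_nonneg (cfsGreen_nonneg r hr (n+1) ((i:ℕ)+1) ((j:ℕ)+1) (by omega)) haE.le
  · intro rhs
    refine ⟨H.mulVec rhs, ?_, ?_⟩
    · show A.mulVec (H.mulVec rhs) = rhs
      rw [Matrix.mulVec_mulVec, hAH, Matrix.one_mulVec]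
    · intro y hy
      have h2 := congrArg H.mulVec hy
      simpa [Matrix.mulVec_mulVec, hGA, Matrix.one_mulVec] using h2
end

section
/- Uniform second-order convergence of the complete flux scheme (main theorem): let s ∈ C⁴([0,1]) and let φ be the solution of the boundary value problem −d φ'' + b φ' = s on (0,1) with φ(0) = φ_L, φ(1) = φ_R. Let (φ_j)_{j=1}^N be the complete flux scheme approximation, i.e. φ_1 = φ_L, φ_N = φ_R and L^h φ_j = W^h s(x_j) for j = 2,…,N−1. Then there exists a constant C > 0, independent of d and h, such that for all d ∈ (0,1], all N ≥ 3 and all j = 1,…,N, the discretization error satisfies |φ(x_j) − φ_j| ≤ C h². -/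
open intervalIntegral Set


/-- Weight function `W(z) = (e^z − 1 − z) / (z (e^z − 1))`. -/
noncomputable def Wt (z : ℝ) : ℝ := (Real.exp z - 1 - z) / (z * (Real.exp z - 1))

/-- Complete flux scheme coefficient `a_W = d h⁻² B(−P)` with `P = b h / d`. -/
noncomputable def cfsAW (b d h : ℝ) : ℝ := d / h ^ 2 * Bern (-(b * h / d))

/-- Complete flux scheme coefficient `a_E = d h⁻² B(P)` with `P = b h / d`. -/
noncomputable def cfsAE (b d h : ℝ) : ℝ := d / h ^ 2 * Bern (b * h / d)

/-- Complete flux scheme coefficient `a_C = a_W + a_E`. -/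
noncomputable def cfsAC (b d h : ℝ) : ℝ := cfsAW b d h + cfsAE b d h

/-- Complete flux scheme weight `b_W = 1/2 − W(P)`. -/
noncomputable def cfsBW (b d h : ℝ) : ℝ := 1 / 2 - Wt (b * h / d)

/-- Complete flux scheme weight `b_C = 1/2 + W(P)`. -/
noncomputable def cfsBC (b d h : ℝ) : ℝ := 1 / 2 + Wt (b * h / d)

/-- Discrete operator `L^h φ (x) = −a_W φ(x−h) + a_C φ(x) − a_E φ(x+h)`. -/
noncomputable def cfsLh (b d h : ℝ) (φ : ℝ → ℝ) (x : ℝ) : ℝ :=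
  -cfsAW b d h * φ (x - h) + cfsAC b d h * φ x - cfsAE b d h * φ (x + h)

/-- Weighting operator `W^h s (x) = b_W s(x−h) + b_C s(x) + b_E s(x+h)` (with `b_E = 0`). -/
noncomputable def cfsWh (b d h : ℝ) (s : ℝ → ℝ) (x : ℝ) : ℝ :=
  cfsBW b d h * s (x - h) + cfsBC b d h * s x + 0 * s (x + h)

/-- Continuous operator `L φ = −d φ'' + b φ'`. -/
noncomputable def contL (b d : ℝ) (φ : ℝ → ℝ) (x : ℝ) : ℝ :=
  -d * iteratedDeriv 2 φ x + b * deriv φ x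

/-- Truncation error of the complete flux scheme at a point `x`:
`τ = L^h φ(x) − W^h (L φ)(x)`. -/
noncomputable def cfsTau (b d h : ℝ) (φ : ℝ → ℝ) (x : ℝ) : ℝ :=
  cfsLh b d h φ x - cfsWh b d h (contL b d φ) x

lemma CFS_exp_gt_one {b d h : ℝ} (hb : 0 < b) (hd : 0 < d) (hh : 0 < h) :
    1 < Real.exp (b * h / d) := by
  have : 0 < b * h / d := by positivity
  calc 1 = Real.exp 0 := Real.exp_zero.symm
  _ < Real.exp (b * h / d) := Real.exp_lt_exp.mpr this

lemma CFS_aE_eq {b d h : ℝ} (hb : 0 < b) (hd : 0 < d) (hh : 0 < h) :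
    cfsAE b d h = b / (h * (Real.exp (b * h / d) - 1)) := by
  have hE := CFS_exp_gt_one hb hd hh
  have h2 : Real.exp (b * h / d) - 1 ≠ 0 := by linarith
  unfold cfsAE Bern
  field_simp

lemma CFS_aW_eq {b d h : ℝ} (hb : 0 < b) (hd : 0 < d) (hh : 0 < h) :
    cfsAW b d h = Real.exp (b * h / d) * cfsAE b d h := by
  have hE := CFS_exp_gt_one hb hd hh
  have h0 : Real.exp (b * h / d) ≠ 0 := by positivity
  have h2 : Real.exp (b * h / d) - 1 ≠ 0 := by linarith
  have h3 : (Real.exp (b * h / d))⁻¹ - 1 ≠ 0 := by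
    have : (Real.exp (b * h / d))⁻¹ < 1 := by
      rw [inv_lt_one_iff₀]; right; exact hE
    linarith
  unfold cfsAW cfsAE Bern
  rw [Real.exp_neg]
  rw [show (Real.exp (b*h/d))⁻¹ - 1 = -(Real.exp (b*h/d) - 1) / Real.exp (b*h/d) by field_simp; ring]
  rw [div_div_eq_mul_div]
  rw [show -(b*h/d) * Real.exp (b*h/d) = -((b*h/d) * Real.exp (b*h/d)) by ring, neg_div_neg_eq]
  ring

lemma CFS_aE_pos {b d h : ℝ} (hb : 0 < b) (hd : 0 < d) (hh : 0 < h) :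
    0 < cfsAE b d h := by
  rw [CFS_aE_eq hb hd hh]
  have hE := CFS_exp_gt_one hb hd hh
  have : 0 < h * (Real.exp (b * h / d) - 1) := by
    apply mul_pos hh; linarith
  positivity

lemma CFS_aW_pos {b d h : ℝ} (hb : 0 < b) (hd : 0 < d) (hh : 0 < h) :
    0 < cfsAW b d h := by
  rw [CFS_aW_eq hb hd hh]
  exact mul_pos (Real.exp_pos _) (CFS_aE_pos hb hd hh)

lemma CFS_wt_mem {b d h : ℝ} (hb : 0 < b) (hd : 0 < d) (hh : 0 < h) :
    Wt (b * h / d) ∈ Set.Icc (0:ℝ) 1 := by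
  have hP : 0 < b * h / d := by positivity
  have hE := CFS_exp_gt_one hb hd hh
  set P := b * h / d with hPdef
  have h1 : 0 ≤ Real.exp P - 1 - P := by
    have := Real.add_one_le_exp P; linarith
  have h2 : 0 < P * (Real.exp P - 1) := by apply mul_pos hP; linarith
  constructor
  · unfold Wt
    exact div_nonneg h1 h2.le
  · unfold Wt
    rw [div_le_one h2]
    -- exp P - 1 - P ≤ P * (exp P - 1)  ⟸  exp P - 1 ≤ P * exp P
    have key : Real.exp P - 1 ≤ P * Real.exp P := by
      have h3 := Real.add_one_le_exp (-P)
      have h4 : Real.exp (-P) = (Real.exp P)⁻¹ := Real.exp_neg P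
      have h5 : 0 < Real.exp P := Real.exp_pos P
      rw [h4] at h3
      have := mul_le_mul_of_nonneg_right h3 h5.le
      rw [add_mul, inv_mul_cancel₀ h5.ne'] at this
      nlinarith
    nlinarith

lemma CFS_ftc_kernel (b d l B μ a c : ℝ) (hld : l * d = b)
    (φ Dφ D2φ : ℝ → ℝ)
    (h1 : ∀ y, HasDerivAt φ (Dφ y) y) (h2 : ∀ y, HasDerivAt Dφ (D2φ y) y)
    (hc1 : Continuous Dφ) (hc2 : Continuous D2φ) :
    ∫ y in a..c, (Real.exp (l * (μ - y)) + B) * (b * Dφ y - d * D2φ y)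
      = (-(d * Real.exp (l * (μ - c)) * Dφ c) + B * (b * φ c - d * Dφ c))
        - (-(d * Real.exp (l * (μ - a)) * Dφ a) + B * (b * φ a - d * Dφ a)) := by
  apply intervalIntegral.integral_eq_sub_of_hasDerivAt
    (f := fun y => -(d * Real.exp (l * (μ - y)) * Dφ y) + B * (b * φ y - d * Dφ y))
  · intro y _
    have hlin : HasDerivAt (fun y : ℝ => l * (μ - y)) (l * (-1)) y :=
      ((hasDerivAt_id y).const_sub μ).const_mul l
    have he : HasDerivAt (fun y : ℝ => Real.exp (l * (μ - y)))
        (Real.exp (l * (μ - y)) * (l * (-1))) y := hlin.exp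
    have T1 : HasDerivAt (fun y => d * Real.exp (l * (μ - y)) * Dφ y)
        ((d * (Real.exp (l * (μ - y)) * (l * (-1)))) * Dφ y
          + (d * Real.exp (l * (μ - y))) * D2φ y) y := by
      have := (he.const_mul d).fun_mul (h2 y)
      simpa [mul_assoc] using this
    have T2 : HasDerivAt (fun y => B * (b * φ y - d * Dφ y))
        (B * (b * Dφ y - d * D2φ y)) y := by
      have := (((h1 y).const_mul b).sub ((h2 y).const_mul d)).const_mul B
      simpa using this
    have := T1.fun_neg.fun_add T2
    convert this using 1
    linear_combination (-(Real.exp (l * (μ - y)) * Dφ y)) * hld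
  · apply Continuous.intervalIntegrable
    fun_prop

lemma CFS_peano {b d h : ℝ} (hb : 0 < b) (hd : 0 < d) (hh : 0 < h)
    (φ Dφ D2φ : ℝ → ℝ)
    (h1 : ∀ y, HasDerivAt φ (Dφ y) y) (h2 : ∀ y, HasDerivAt Dφ (D2φ y) y)
    (hc1 : Continuous Dφ) (hc2 : Continuous D2φ) (x : ℝ) :
    cfsLh b d h φ x = (cfsAE b d h / b) *
      ((∫ y in x..(x+h), (Real.exp ((b/d) * (x + h - y)) - 1) * (b * Dφ y - d * D2φ y))
       + (∫ y in (x-h)..x, (Real.exp (b*h/d) - Real.exp ((b/d) * (x - y))) * (b * Dφ y - d * D2φ y))) := by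
  have hE := CFS_exp_gt_one hb hd hh
  set l := b / d with hl
  have hld : l * d = b := by rw [hl]; field_simp
  have HR := CFS_ftc_kernel b d l (-1) (x+h) x (x+h) hld φ Dφ D2φ h1 h2 hc1 hc2
  have HL := CFS_ftc_kernel b d l (-(Real.exp (b*h/d))) x (x-h) x hld φ Dφ D2φ h1 h2 hc1 hc2
  have e1 : (∫ y in x..(x+h), (Real.exp (l * (x + h - y)) - 1) * (b * Dφ y - d * D2φ y))
      = ∫ y in x..(x+h), (Real.exp (l * (x + h - y)) + (-1)) * (b * Dφ y - d * D2φ y) := by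
    apply integral_congr
    intro y _
    ring
  have e2 : (∫ y in (x-h)..x, (Real.exp (b*h/d) - Real.exp (l * (x - y))) * (b * Dφ y - d * D2φ y))
      = -∫ y in (x-h)..x, (Real.exp (l * (x - y)) + (-(Real.exp (b*h/d)))) * (b * Dφ y - d * D2φ y) := by
    rw [← intervalIntegral.integral_neg]
    apply integral_congr
    intro y _
    ring
  rw [e1, e2, HR, HL]
  rw [show l * (x + h - (x+h)) = 0 by ring, show l * (x + h - x) = b*h/d by rw [hl]; ring,
      show l * (x - x) = 0 by ring, show l * (x - (x-h)) = b*h/d by rw [hl]; ring, Real.exp_zero]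
  unfold cfsLh cfsAC
  rw [CFS_aW_eq hb hd hh, CFS_aE_eq hb hd hh]
  have h2' : Real.exp (b * h / d) - 1 ≠ 0 := by linarith
  field_simp
  ring

lemma CFS_moment {b d h : ℝ} (hb : 0 < b) (hd : 0 < d) (hh : 0 < h) (α β x : ℝ) :
    cfsLh b d h (fun y => (α/b + β*d/b^2) * y + (β/(2*b)) * (y-x)^2) x
      = cfsBW b d h * (α + β * ((x-h) - x)) + cfsBC b d h * (α + β * (x - x)) := by
  have hE := CFS_exp_gt_one hb hd hh
  have h2 : Real.exp (b*h/d) - 1 ≠ 0 := by linarith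
  have hP : b*h/d ≠ 0 := by positivity
  unfold cfsLh cfsAC cfsBW cfsBC Wt
  rw [CFS_aW_eq hb hd hh, CFS_aE_eq hb hd hh]
  field_simp
  ring

lemma CFS_contdiff_deriv {f : ℝ → ℝ} (hf : ContDiff ℝ 4 f) : ContDiff ℝ 3 (deriv f) := by
  have h' : ContDiff ℝ ((3:WithTop ℕ∞) + 1) f := by
    rw [show ((3:WithTop ℕ∞) + 1) = 4 by norm_num]; exact hf
  exact (contDiff_succ_iff_deriv.mp h').2.2

lemma CFS_taylor {s : ℝ → ℝ} (hs : ContDiff ℝ 4 s) {M2 : ℝ}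
    (hM2 : ∀ z ∈ Icc (0:ℝ) 1, |deriv (deriv s) z| ≤ M2)
    {x y : ℝ} (hx : x ∈ Icc (0:ℝ) 1) (hy : y ∈ Icc (0:ℝ) 1) {h : ℝ} (hxy : |y - x| ≤ h) :
    |s y - s x - (y - x) * deriv s x| ≤ M2 * h ^ 2 := by
  have hM2nn : 0 ≤ M2 := le_trans (abs_nonneg _) (hM2 0 (by constructor <;> norm_num))
  have hh : 0 ≤ h := le_trans (abs_nonneg _) hxy
  have hds : ContDiff ℝ 3 (deriv s) := CFS_contdiff_deriv hs
  have hds' : Differentiable ℝ (deriv s) := hds.differentiable (by norm_num)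
  have lip : ∀ z ∈ Icc (0:ℝ) 1, |deriv s z - deriv s x| ≤ M2 * |z - x| := by
    intro z hz
    have := Convex.norm_image_sub_le_of_norm_deriv_le (f := deriv s)
      (fun w _ => hds'.differentiableAt) (fun w hw => hM2 w hw) (convex_Icc 0 1) hx hz
    simpa [Real.norm_eq_abs] using this
  have hFd : ∀ z, HasDerivAt (fun z => s z - (z - x) * deriv s x)
      (deriv s z - deriv s x) z := by
    intro z
    have h1 : HasDerivAt s (deriv s z) z :=
      ((hs.differentiable (by norm_num)) z).hasDerivAt
    have h2 : HasDerivAt (fun z : ℝ => (z - x) * deriv s x) (deriv s x) z := by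
      simpa using ((hasDerivAt_id z).sub_const x).mul_const (deriv s x)
    exact h1.sub h2
  have hsub : Set.uIcc x y ⊆ Set.Icc (0:ℝ) 1 := by
    rw [← Set.uIcc_of_le (by norm_num : (0:ℝ) ≤ 1)]
    exact Set.uIcc_subset_uIcc (by rwa [Set.uIcc_of_le (by norm_num : (0:ℝ) ≤ 1)])
      (by rwa [Set.uIcc_of_le (by norm_num : (0:ℝ) ≤ 1)])
  have key := Convex.norm_image_sub_le_of_norm_deriv_le
    (f := fun z => s z - (z - x) * deriv s x) (C := M2 * h)
    (fun w _ => (hFd w).differentiableAt)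
    (fun w hw => by
      rw [(hFd w).deriv]
      have hw1 : |w - x| ≤ h := by
        have : |w - x| ≤ |y - x| := Set.abs_sub_left_of_mem_uIcc hw
        linarith
      calc ‖deriv s w - deriv s x‖ = |deriv s w - deriv s x| := rfl
      _ ≤ M2 * |w - x| := lip w (hsub hw)
      _ ≤ M2 * h := by nlinarith [abs_nonneg (w - x)])
    (convex_uIcc x y) (Set.left_mem_uIcc) (Set.right_mem_uIcc)
  have h0 : ((fun z => s z - (z - x) * deriv s x) y) - ((fun z => s z - (z - x) * deriv s x) x)
      = s y - s x - (y - x) * deriv s x := by simp; ring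
  rw [Real.norm_eq_abs, h0, Real.norm_eq_abs] at key
  calc |s y - s x - (y - x) * deriv s x| ≤ M2 * h * |y - x| := key
  _ ≤ M2 * h ^ 2 := by
    have := mul_le_mul_of_nonneg_left hxy (mul_nonneg hM2nn hh)
    nlinarith

lemma CFS_minprinciple (aW aE : ℝ) (hW : 0 < aW) (hE : 0 < aE) (N : ℕ) (hN : 3 ≤ N)
    (v : ℕ → ℝ) (h1 : 0 ≤ v 1) (hNv : 0 ≤ v N)
    (hint : ∀ j, 2 ≤ j → j ≤ N - 1 → aW * v (j-1) + aE * v (j+1) ≤ (aW + aE) * v j) :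
    ∀ j, 1 ≤ j → j ≤ N → 0 ≤ v j := by
  have key : ∀ j0, 1 ≤ j0 → j0 ≤ N → (∀ i, 1 ≤ i → i ≤ N → v j0 ≤ v i) → 0 ≤ v j0 := by
    intro j0
    induction j0 using Nat.strong_induction_on with
    | _ j0 ih =>
      intro hj1 hjN hmin
      rcases eq_or_lt_of_le hj1 with h1' | h1'
      · rw [← h1']; exact h1
      · rcases eq_or_lt_of_le hjN with hN' | hN'
        · rw [hN']; exact hNv
        · have hA := hint j0 (by omega) (by omega)
          have hl : v j0 ≤ v (j0-1) := hmin _ (by omega) (by omega)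
          have hr : v j0 ≤ v (j0+1) := hmin _ (by omega) (by omega)
          have heq : v (j0-1) = v j0 := by nlinarith
          have hmin' : ∀ i, 1 ≤ i → i ≤ N → v (j0-1) ≤ v i := by
            intro i hi1 hi2; rw [heq]; exact hmin i hi1 hi2
          have := ih (j0-1) (by omega) (by omega) (by omega) hmin'
          rw [heq] at this
          exact this
  intro j hj1 hjN
  obtain ⟨jm, hjm, hjmin⟩ := Finset.exists_min_image (Finset.Icc 1 N) v
    ⟨1, by simp; omega⟩
  simp only [Finset.mem_Icc] at hjm
  have h0 : 0 ≤ v jm := key jm hjm.1 hjm.2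
    (fun i hi1 hi2 => hjmin i (Finset.mem_Icc.mpr ⟨hi1, hi2⟩))
  exact le_trans h0 (hjmin j (Finset.mem_Icc.mpr ⟨hj1, hjN⟩))

lemma CFS_bW_abs {b d h : ℝ} (hb : 0 < b) (hd : 0 < d) (hh : 0 < h) :
    |cfsBW b d h| ≤ 1/2 := by
  have := CFS_wt_mem hb hd hh
  unfold cfsBW
  rw [abs_le]
  constructor <;> [linarith [this.2]; linarith [this.1]]

set_option maxHeartbeats 2000000 in
lemma CFS_quad {b d h : ℝ} (hb : 0 < b) (hd : 0 < d) (hh : 0 < h)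
    (s : ℝ → ℝ) (hs : ContDiff ℝ 4 s) (M2 : ℝ)
    (hM2 : ∀ z ∈ Icc (0:ℝ) 1, |deriv (deriv s) z| ≤ M2)
    (φ : ℝ → ℝ) (hφ : ContDiff ℝ 4 φ)
    (hode : ∀ z ∈ Icc (0:ℝ) 1, -d * iteratedDeriv 2 φ z + b * deriv φ z = s z)
    (x : ℝ) (hx1 : h ≤ x) (hx2 : x + h ≤ 1) :
    |cfsLh b d h φ x - cfsWh b d h s x| ≤ 3 * M2 * h ^ 2 := by
  have hM2nn : 0 ≤ M2 := le_trans (abs_nonneg _) (hM2 0 (by constructor <;> norm_num))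
  have hE := CFS_exp_gt_one hb hd hh
  have hEm1 : 0 < Real.exp (b*h/d) - 1 := by linarith
  -- derivative facts for φ
  have hφd : Differentiable ℝ φ := hφ.differentiable (by norm_num)
  have h1φ : ∀ y, HasDerivAt φ (deriv φ y) y := fun y => (hφd y).hasDerivAt
  have hφ3 : ContDiff ℝ 3 (deriv φ) := CFS_contdiff_deriv hφ
  have hφd2 : Differentiable ℝ (deriv φ) := hφ3.differentiable (by norm_num)
  have h2φ : ∀ y, HasDerivAt (deriv φ) (deriv (deriv φ) y) y := fun y => (hφd2 y).hasDerivAt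
  have hc1 : Continuous (deriv φ) := hφ3.continuous
  have hc2 : Continuous (deriv (deriv φ)) := hφ3.continuous_deriv (by norm_num)
  have hid2 : iteratedDeriv 2 φ = deriv (deriv φ) := by
    rw [show (2:ℕ) = 1 + 1 from rfl, iteratedDeriv_succ, iteratedDeriv_one]
  have hgs : ∀ z ∈ Icc (0:ℝ) 1, b * deriv φ z - d * deriv (deriv φ) z = s z := by
    intro z hz
    have := hode z hz
    rw [hid2] at this
    linarith
  -- Peano representation for φ
  have Pφ := CFS_peano hb hd hh φ (deriv φ) (deriv (deriv φ)) h1φ h2φ hc1 hc2 x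
  -- interval inclusions
  have hsubR : Set.uIcc x (x+h) ⊆ Icc (0:ℝ) 1 := by
    rw [Set.uIcc_of_le (by linarith)]
    intro z hz
    exact ⟨by linarith [hz.1], by linarith [hz.2]⟩
  have hsubL : Set.uIcc (x-h) x ⊆ Icc (0:ℝ) 1 := by
    rw [Set.uIcc_of_le (by linarith)]
    intro z hz
    exact ⟨by linarith [hz.1], by linarith [hz.2]⟩
  -- replace phi-source by s in the integrals
  have eR : (∫ y in x..(x+h), (Real.exp ((b/d) * (x + h - y)) - 1) * (b * deriv φ y - d * deriv (deriv φ) y))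
      = ∫ y in x..(x+h), (Real.exp ((b/d) * (x + h - y)) - 1) * s y :=
    integral_congr (fun y hy => by rw [hgs y (hsubR hy)])
  have eL : (∫ y in (x-h)..x, (Real.exp (b*h/d) - Real.exp ((b/d) * (x - y))) * (b * deriv φ y - d * deriv (deriv φ) y))
      = ∫ y in (x-h)..x, (Real.exp (b*h/d) - Real.exp ((b/d) * (x - y))) * s y :=
    integral_congr (fun y hy => by rw [hgs y (hsubL hy)])
  -- comparison quadratic
  have h2sq : ∀ y : ℝ, HasDerivAt (fun y : ℝ => (y-x)^2) (2*(y-x)) y := fun y => by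
    simpa using ((hasDerivAt_id y).sub_const x).fun_pow 2
  have h1a : ∀ y, HasDerivAt (fun y => (s x/b + deriv s x*d/b^2) * y + (deriv s x/(2*b)) * (y-x)^2)
      ((s x/b + deriv s x*d/b^2) + (deriv s x/(2*b)) * (2*(y-x))) y := fun y => by
    simpa using (((hasDerivAt_id y).const_mul (s x/b + deriv s x*d/b^2)).fun_add
      ((h2sq y).const_mul (deriv s x/(2*b))))
  have h2a : ∀ y, HasDerivAt (fun y => (s x/b + deriv s x*d/b^2) + (deriv s x/(2*b)) * (2*(y-x)))
      ((deriv s x/(2*b)) * 2) y := fun y => by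
    have := ((((hasDerivAt_id y).sub_const x).const_mul 2).const_mul
      (deriv s x/(2*b))).const_add (s x/b + deriv s x*d/b^2)
    simpa using this
  have Pa := CFS_peano hb hd hh
    (fun y => (s x/b + deriv s x*d/b^2) * y + (deriv s x/(2*b)) * (y-x)^2)
    (fun y => (s x/b + deriv s x*d/b^2) + (deriv s x/(2*b)) * (2*(y-x)))
    (fun _ => (deriv s x/(2*b)) * 2)
    h1a h2a (by fun_prop) continuous_const x
  have hpa : ∀ y : ℝ, b * ((s x/b + deriv s x*d/b^2) + (deriv s x/(2*b)) * (2*(y-x)))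
      - d * ((deriv s x/(2*b)) * 2) = s x + deriv s x * (y - x) := by
    intro y
    field_simp
    ring
  have eRa : (∫ y in x..(x+h), (Real.exp ((b/d) * (x + h - y)) - 1) *
        (b * ((s x/b + deriv s x*d/b^2) + (deriv s x/(2*b)) * (2*(y-x))) - d * ((deriv s x/(2*b)) * 2)))
      = ∫ y in x..(x+h), (Real.exp ((b/d) * (x + h - y)) - 1) * (s x + deriv s x * (y - x)) :=
    integral_congr (fun y _ => by rw [hpa y])
  have eLa : (∫ y in (x-h)..x, (Real.exp (b*h/d) - Real.exp ((b/d) * (x - y))) *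
        (b * ((s x/b + deriv s x*d/b^2) + (deriv s x/(2*b)) * (2*(y-x))) - d * ((deriv s x/(2*b)) * 2)))
      = ∫ y in (x-h)..x, (Real.exp (b*h/d) - Real.exp ((b/d) * (x - y))) * (s x + deriv s x * (y - x)) :=
    integral_congr (fun y _ => by rw [hpa y])
  have Mo := CFS_moment hb hd hh (s x) (deriv s x) x
  have hPa' : (cfsAE b d h / b) *
      ((∫ y in x..(x+h), (Real.exp ((b/d) * (x + h - y)) - 1) * (s x + deriv s x * (y - x)))
        + (∫ y in (x-h)..x, (Real.exp (b*h/d) - Real.exp ((b/d) * (x - y))) * (s x + deriv s x * (y - x))))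
      = cfsBW b d h * (s x + deriv s x * ((x-h) - x)) + cfsBC b d h * (s x + deriv s x * (x - x)) := by
    rw [← eRa, ← eLa, ← Pa]
    exact Mo
  -- continuity for integrability
  have hKRc : Continuous (fun y => Real.exp ((b/d) * (x + h - y)) - 1) := by fun_prop
  have hKLc : Continuous (fun y => Real.exp (b*h/d) - Real.exp ((b/d) * (x - y))) := by fun_prop
  have hsc : Continuous s := hs.continuous
  have hpac : Continuous (fun y => s x + deriv s x * (y - x)) := by fun_prop
  -- splitting
  have hsplitR : (∫ y in x..(x+h), (Real.exp ((b/d) * (x + h - y)) - 1) * s y)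
      = (∫ y in x..(x+h), (Real.exp ((b/d) * (x + h - y)) - 1) * (s y - (s x + deriv s x * (y - x))))
        + ∫ y in x..(x+h), (Real.exp ((b/d) * (x + h - y)) - 1) * (s x + deriv s x * (y - x)) := by
    rw [← integral_add ((hKRc.fun_mul (hsc.fun_sub hpac)).intervalIntegrable _ _)
      ((hKRc.fun_mul hpac).intervalIntegrable _ _)]
    apply integral_congr
    intro y _
    ring
  have hsplitL : (∫ y in (x-h)..x, (Real.exp (b*h/d) - Real.exp ((b/d) * (x - y))) * s y)
      = (∫ y in (x-h)..x, (Real.exp (b*h/d) - Real.exp ((b/d) * (x - y))) * (s y - (s x + deriv s x * (y - x))))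
        + ∫ y in (x-h)..x, (Real.exp (b*h/d) - Real.exp ((b/d) * (x - y))) * (s x + deriv s x * (y - x)) := by
    rw [← integral_add ((hKLc.fun_mul (hsc.fun_sub hpac)).intervalIntegrable _ _)
      ((hKLc.fun_mul hpac).intervalIntegrable _ _)]
    apply integral_congr
    intro y _
    ring
  -- the error representation
  have heq : cfsLh b d h φ x - cfsWh b d h s x
      = (cfsAE b d h / b) *
          ((∫ y in x..(x+h), (Real.exp ((b/d) * (x + h - y)) - 1) * (s y - (s x + deriv s x * (y - x))))
            + ∫ y in (x-h)..x, (Real.exp (b*h/d) - Real.exp ((b/d) * (x - y))) * (s y - (s x + deriv s x * (y - x))))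
        + cfsBW b d h * ((s x + deriv s x * ((x-h) - x)) - s (x-h)) := by
    rw [Pφ, eR, eL]
    unfold cfsWh
    rw [hsplitR, hsplitL]
    linear_combination hPa'
  -- Taylor remainder bounds
  have hRbound : ∀ y, y ∈ Icc (0:ℝ) 1 → |y - x| ≤ h →
      |s y - (s x + deriv s x * (y - x))| ≤ M2 * h ^ 2 := by
    intro y hy hyx
    have := CFS_taylor hs hM2 (Set.mem_of_mem_of_subset (Set.left_mem_uIcc) hsubR) hy hyx
    calc |s y - (s x + deriv s x * (y - x))|
        = |s y - s x - (y - x) * deriv s x| := by congr 1; ring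
    _ ≤ M2 * h ^ 2 := this
  -- bound the right integral
  have hbR : |∫ y in x..(x+h), (Real.exp ((b/d) * (x + h - y)) - 1) * (s y - (s x + deriv s x * (y - x)))|
      ≤ ((Real.exp (b*h/d) - 1) * (M2 * h ^ 2)) * h := by
    have := intervalIntegral.norm_integral_le_of_norm_le_const
      (C := (Real.exp (b*h/d) - 1) * (M2 * h ^ 2))
      (f := fun y => (Real.exp ((b/d) * (x + h - y)) - 1) * (s y - (s x + deriv s x * (y - x))))
      (a := x) (b := x + h) ?_
    · rw [Real.norm_eq_abs] at this
      calc |∫ y in x..(x+h), (Real.exp ((b/d) * (x + h - y)) - 1) * (s y - (s x + deriv s x * (y - x)))|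
          ≤ ((Real.exp (b*h/d) - 1) * (M2 * h ^ 2)) * |x + h - x| := this
      _ = ((Real.exp (b*h/d) - 1) * (M2 * h ^ 2)) * h := by
          rw [show x + h - x = h by ring, abs_of_pos hh]
    · intro y hy
      rw [Set.uIoc_of_le (by linarith : x ≤ x + h)] at hy
      have hyIcc : y ∈ Icc (0:ℝ) 1 := ⟨by linarith [hy.1], by linarith [hy.2]⟩
      have hyx : |y - x| ≤ h := by
        rw [abs_of_pos (by linarith [hy.1])]
        linarith [hy.2]
      have hker0 : 0 ≤ Real.exp ((b/d) * (x + h - y)) - 1 := by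
        have h0 : (0:ℝ) ≤ (b/d) * (x + h - y) :=
          mul_nonneg (by positivity) (by linarith [hy.2])
        linarith [Real.one_le_exp h0]
      have hker1 : Real.exp ((b/d) * (x + h - y)) - 1 ≤ Real.exp (b*h/d) - 1 := by
        have harg : (b/d) * (x + h - y) ≤ b*h/d := by
          rw [show b*h/d = (b/d)*h by ring]
          exact mul_le_mul_of_nonneg_left (by linarith [hy.1]) (by positivity)
        linarith [Real.exp_le_exp.mpr harg]
      rw [Real.norm_eq_abs, abs_mul]
      apply mul_le_mul _ (hRbound y hyIcc hyx) (abs_nonneg _) (by linarith)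
      rw [abs_of_nonneg hker0]
      exact hker1
  -- bound the left integral
  have hbL : |∫ y in (x-h)..x, (Real.exp (b*h/d) - Real.exp ((b/d) * (x - y))) * (s y - (s x + deriv s x * (y - x)))|
      ≤ ((Real.exp (b*h/d) - 1) * (M2 * h ^ 2)) * h := by
    have := intervalIntegral.norm_integral_le_of_norm_le_const
      (C := (Real.exp (b*h/d) - 1) * (M2 * h ^ 2))
      (f := fun y => (Real.exp (b*h/d) - Real.exp ((b/d) * (x - y))) * (s y - (s x + deriv s x * (y - x))))
      (a := x - h) (b := x) ?_
    · rw [Real.norm_eq_abs] at this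
      calc |∫ y in (x-h)..x, (Real.exp (b*h/d) - Real.exp ((b/d) * (x - y))) * (s y - (s x + deriv s x * (y - x)))|
          ≤ ((Real.exp (b*h/d) - 1) * (M2 * h ^ 2)) * |x - (x - h)| := this
      _ = ((Real.exp (b*h/d) - 1) * (M2 * h ^ 2)) * h := by
          rw [show x - (x - h) = h by ring, abs_of_pos hh]
    · intro y hy
      rw [Set.uIoc_of_le (by linarith : x - h ≤ x)] at hy
      have hyIcc : y ∈ Icc (0:ℝ) 1 := ⟨by linarith [hy.1], by linarith [hy.2]⟩
      have hyx : |y - x| ≤ h := by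
        rw [abs_of_nonpos (by linarith [hy.2])]
        linarith [hy.1]
      have hker0 : 0 ≤ Real.exp (b*h/d) - Real.exp ((b/d) * (x - y)) := by
        have harg : (b/d) * (x - y) ≤ b*h/d := by
          rw [show b*h/d = (b/d)*h by ring]
          exact mul_le_mul_of_nonneg_left (by linarith [hy.1]) (by positivity)
        linarith [Real.exp_le_exp.mpr harg]
      have hker1 : Real.exp (b*h/d) - Real.exp ((b/d) * (x - y)) ≤ Real.exp (b*h/d) - 1 := by
        have h0 : (0:ℝ) ≤ (b/d) * (x - y) :=
          mul_nonneg (by positivity) (by linarith [hy.2])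
        linarith [Real.one_le_exp h0]
      rw [Real.norm_eq_abs, abs_mul]
      apply mul_le_mul _ (hRbound y hyIcc hyx) (abs_nonneg _) (by linarith)
      rw [abs_of_nonneg hker0]
      exact hker1
  -- bound the boundary remainder
  have hZ : |(s x + deriv s x * ((x-h) - x)) - s (x-h)| ≤ M2 * h ^ 2 := by
    rw [abs_sub_comm]
    apply hRbound (x-h) ⟨by linarith, by linarith⟩
    rw [show x - h - x = -h by ring, abs_neg, abs_of_pos hh]
  -- put it together
  have hcval : cfsAE b d h / b = 1/(h*(Real.exp (b*h/d) - 1)) := by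
    rw [CFS_aE_eq hb hd hh]
    rw [div_div, mul_comm (h * (Real.exp (b * h / d) - 1)) b, ← div_div, div_self hb.ne']
  have hcpos : (0:ℝ) < 1/(h*(Real.exp (b*h/d) - 1)) := by positivity
  rw [heq]
  have habs1 : |(cfsAE b d h / b) *
        ((∫ y in x..(x+h), (Real.exp ((b/d) * (x + h - y)) - 1) * (s y - (s x + deriv s x * (y - x))))
          + ∫ y in (x-h)..x, (Real.exp (b*h/d) - Real.exp ((b/d) * (x - y))) * (s y - (s x + deriv s x * (y - x))))|
      ≤ (1/(h*(Real.exp (b*h/d) - 1))) * (((Real.exp (b*h/d) - 1) * (M2 * h ^ 2)) * h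
          + ((Real.exp (b*h/d) - 1) * (M2 * h ^ 2)) * h) := by
    rw [abs_mul, hcval, abs_of_pos hcpos]
    apply mul_le_mul_of_nonneg_left _ hcpos.le
    calc |_ + _| ≤ |_| + |_| := abs_add_le _ _
    _ ≤ _ := add_le_add hbR hbL
  have habs2 : |cfsBW b d h * ((s x + deriv s x * ((x-h) - x)) - s (x-h))| ≤ (1/2) * (M2 * h ^ 2) := by
    rw [abs_mul]
    exact mul_le_mul (CFS_bW_abs hb hd hh) hZ (abs_nonneg _) (by norm_num)
  have hsimp : (1/(h*(Real.exp (b*h/d) - 1))) * (((Real.exp (b*h/d) - 1) * (M2 * h ^ 2)) * h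
      + ((Real.exp (b*h/d) - 1) * (M2 * h ^ 2)) * h) = 2 * (M2 * h ^ 2) := by
    have hEm1' := hEm1.ne'
    rw [div_mul_eq_mul_div, one_mul, div_eq_iff (mul_ne_zero hh.ne' hEm1')]
    ring
  calc |_ + _| ≤ |_| + |_| := abs_add_le _ _
  _ ≤ (1/(h*(Real.exp (b*h/d) - 1))) * (((Real.exp (b*h/d) - 1) * (M2 * h ^ 2)) * h
        + ((Real.exp (b*h/d) - 1) * (M2 * h ^ 2)) * h) + (1/2) * (M2 * h ^ 2) :=
      add_le_add habs1 habs2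
  _ ≤ 3 * M2 * h ^ 2 := by
      rw [hsimp]
      nlinarith [sq_nonneg h, mul_nonneg hM2nn (sq_nonneg h)]

set_option maxHeartbeats 2000000 in
/-- uniform second-order convergence of the complete flux scheme:
there exists `C > 0`, independent of `d ∈ (0,1]` and `h`, such that the
discretization error satisfies `|φ(x_j) − φ_j| ≤ C h²` at every grid point. -/
theorem cfs_uniform_convergence (b : ℝ) (hb : 0 < b)
    (s : ℝ → ℝ) (hs : ContDiff ℝ 4 s) (φL φR : ℝ) :
    ∃ C > (0 : ℝ), ∀ d ∈ Set.Ioc (0 : ℝ) 1,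
      ∀ N : ℕ, 3 ≤ N →
        let h : ℝ := 1 / ((N : ℝ) - 1)
        ∀ φ : ℝ → ℝ, ContDiff ℝ 4 φ →
          (∀ x ∈ Set.Ioo (0 : ℝ) 1, -d * iteratedDeriv 2 φ x + b * deriv φ x = s x) →
          φ 0 = φL → φ 1 = φR →
        ∀ φv : ℕ → ℝ, φv 1 = φL → φv N = φR →
          (∀ j : ℕ, 2 ≤ j → j ≤ N - 1 →
            -cfsAW b d h * φv (j - 1) + cfsAC b d h * φv j - cfsAE b d h * φv (j + 1)
              = cfsWh b d h s (((j : ℝ) - 1) * h)) →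
        ∀ j : ℕ, 1 ≤ j → j ≤ N →
          |φ (((j : ℝ) - 1) * h) - φv j| ≤ C * h ^ 2 := by
  have hs2c : Continuous (deriv (deriv s)) :=
    (CFS_contdiff_deriv hs).continuous_deriv (by norm_num)
  obtain ⟨M0, hM0⟩ := (isCompact_Icc : IsCompact (Icc (0:ℝ) 1)).exists_bound_of_continuousOn
    hs2c.continuousOn
  set M2 := max M0 0 with hM2def
  have hM2nn : (0:ℝ) ≤ M2 := le_max_right _ _
  have hM2 : ∀ z ∈ Icc (0:ℝ) 1, |deriv (deriv s) z| ≤ M2 := fun z hz =>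
    le_trans (by simpa using hM0 z hz) (le_max_left _ _)
  refine ⟨3*(M2+1)/b, div_pos (by linarith) hb, ?_⟩
  intro d hd N hN
  intro h
  intro φ hφ hode hφ0 hφ1 φv hv1 hvN hscheme j hj1 hjN
  have hhdef : h = 1/((N:ℝ)-1) := rfl
  have hd0 : 0 < d := hd.1
  have hNr : (2:ℝ) ≤ (N:ℝ) - 1 := by
    have : (3:ℝ) ≤ (N:ℝ) := by exact_mod_cast hN
    linarith
  have hh : 0 < h := by
    rw [hhdef]
    apply div_pos one_pos (by linarith)
  have hNh : ((N:ℝ)-1) * h = 1 := by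
    rw [hhdef]
    field_simp
  -- extend the ODE to the closed interval
  have hodeIcc : ∀ z ∈ Icc (0:ℝ) 1, -d * iteratedDeriv 2 φ z + b * deriv φ z = s z := by
    have hid2 : iteratedDeriv 2 φ = deriv (deriv φ) := by
      rw [show (2:ℕ) = 1 + 1 from rfl, iteratedDeriv_succ, iteratedDeriv_one]
    have hφ3 : ContDiff ℝ 3 (deriv φ) := CFS_contdiff_deriv hφ
    have hcont1 : Continuous (fun z => -d * iteratedDeriv 2 φ z + b * deriv φ z) := by
      rw [hid2]
      exact (continuous_const.mul (hφ3.continuous_deriv (by norm_num))).add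
        (continuous_const.mul hφ3.continuous)
    have heqon : Set.EqOn (fun z => -d * iteratedDeriv 2 φ z + b * deriv φ z) s (Ioo 0 1) :=
      fun z hz => hode z hz
    have hcl := heqon.closure hcont1 hs.continuous
    rw [closure_Ioo (by norm_num : (0:ℝ) ≠ 1)] at hcl
    exact fun z hz => hcl hz
  set T := 3 * M2 * h^2 with hT
  have hTnn : 0 ≤ T := by positivity
  have htau : ∀ j', 2 ≤ j' → j' ≤ N - 1 →
      |cfsLh b d h φ (((j':ℝ)-1)*h) - cfsWh b d h s (((j':ℝ)-1)*h)| ≤ T := by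
    intro j' h2 h3
    apply CFS_quad hb hd0 hh s hs M2 hM2 φ hφ hodeIcc
    · have : (2:ℝ) ≤ (j':ℝ) := by exact_mod_cast h2
      nlinarith
    · have hj'N : (j':ℝ) ≤ (N:ℝ) - 1 := by
        have h4 : (j':ℝ) ≤ ((N-1 : ℕ):ℝ) := by exact_mod_cast h3
        rwa [Nat.cast_sub (by omega), Nat.cast_one] at h4
      nlinarith
  have hgrid : ∀ j', 2 ≤ j' → j' ≤ N - 1 →
      -cfsAW b d h * (φ (((j':ℝ)-1)*h - h) - φv (j'-1))
      + cfsAC b d h * (φ (((j':ℝ)-1)*h) - φv j')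
      - cfsAE b d h * (φ (((j':ℝ)-1)*h + h) - φv (j'+1))
      = cfsLh b d h φ (((j':ℝ)-1)*h) - cfsWh b d h s (((j':ℝ)-1)*h) := by
    intro j' h2 h3
    have hsch := hscheme j' h2 h3
    unfold cfsLh cfsAC
    unfold cfsAC at hsch
    linear_combination -hsch
  have hab : cfsAW b d h - cfsAE b d h = b/h := by
    rw [CFS_aW_eq hb hd0 hh, CFS_aE_eq hb hd0 hh]
    have hE := CFS_exp_gt_one hb hd0 hh
    have h2 : Real.exp (b*h/d) - 1 ≠ 0 := by linarith
    field_simp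
  have haC : cfsAC b d h = cfsAW b d h + cfsAE b d h := rfl
  have hkey : ∀ j' : ℕ, (cfsAW b d h + cfsAE b d h) * ((T/b)*(((j':ℝ)-1)*h))
      - cfsAW b d h * ((T/b)*(((j':ℝ)-1-1)*h))
      - cfsAE b d h * ((T/b)*(((j':ℝ)+1-1)*h)) = T := by
    intro j'
    have hW : cfsAW b d h = b/h + cfsAE b d h := by linarith
    rw [hW]
    field_simp
    ring
  have hbnd : ∀ sgn : ℝ, sgn = 1 ∨ sgn = -1 →
      ∀ i, 1 ≤ i → i ≤ N →
      0 ≤ (T/b)*(((i:ℝ)-1)*h) + sgn * (φ (((i:ℝ)-1)*h) - φv i) := by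
    intro sgn hsgn
    apply CFS_minprinciple (cfsAW b d h) (cfsAE b d h) (CFS_aW_pos hb hd0 hh)
      (CFS_aE_pos hb hd0 hh) N hN
    · -- value at 1
      simp only [Nat.cast_one]
      rw [show ((1:ℝ)-1)*h = 0 by ring, hφ0, hv1]
      simp
    · -- value at N
      rw [hNh, hφ1, hvN]
      have : 0 ≤ T/b := div_nonneg hTnn hb.le
      simp only [sub_self, mul_zero, add_zero, mul_one]
      linarith
    · -- interior inequality
      intro j' h2 h3
      have hc1 : ((j'-1:ℕ):ℝ) = (j':ℝ) - 1 := by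
        rw [Nat.cast_sub (by omega), Nat.cast_one]
      have hc2 : ((j'+1:ℕ):ℝ) = (j':ℝ) + 1 := by
        rw [Nat.cast_add, Nat.cast_one]
      have hG := hgrid j' h2 h3
      rw [show (((j':ℝ)-1)*h - h) = ((j':ℝ)-1-1)*h by ring,
          show (((j':ℝ)-1)*h + h) = ((j':ℝ)+1-1)*h by ring] at hG
      have hτ := (abs_le.mp (htau j' h2 h3)).1
      have hτu := (abs_le.mp (htau j' h2 h3)).2
      have hk := hkey j'
      rw [hc1, hc2]
      rw [haC] at hG
      rcases hsgn with hsgn | hsgn <;> rw [hsgn] <;> nlinarith [hG, hk, hτ, hτu]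
  have hup := hbnd (-1) (Or.inr rfl) j hj1 hjN
  have hlo := hbnd 1 (Or.inl rfl) j hj1 hjN
  have hxj0 : 0 ≤ ((j:ℝ)-1)*h := by
    have : (1:ℝ) ≤ (j:ℝ) := by exact_mod_cast hj1
    nlinarith
  have hxj1 : ((j:ℝ)-1)*h ≤ 1 := by
    have : (j:ℝ) ≤ (N:ℝ) := by exact_mod_cast hjN
    nlinarith
  have hTb : 0 ≤ T/b := div_nonneg hTnn hb.le
  have hscale : (T/b)*(((j:ℝ)-1)*h) ≤ T/b := by nlinarith
  have habs : |φ (((j:ℝ)-1)*h) - φv j| ≤ T/b := by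
    rw [abs_le]
    constructor <;> nlinarith [hup, hlo, hscale, mul_nonneg hTb hxj0]
  calc |φ (((j:ℝ)-1)*h) - φv j| ≤ T/b := habs
  _ = 3*M2*h^2/b := by rw [hT]
  _ ≤ 3*(M2+1)/b * h^2 := by
      rw [show 3*(M2+1)/b * h^2 = 3*(M2+1)*h^2/b by ring]
      gcongr
      linarith
end

section
/- Three-term decomposition: let m ≥ 1 and s ∈ C^m([0,1]), and fix boundary values φ_L, φ_R. There exist a function A₀ ∈ C^{m+1}([0,1]), a constant B₀, a function F₀ ∈ C^{m−1}([0,1]) and a constant c > 0, all independent of d, such that for every d ∈ (0,1] the solution φ of −d φ'' + b φ' = s on (0,1), φ(0) = φ_L, φ(1) = φ_R, can be written as φ(x) = A₀(x) + B₀ exp(−b d⁻¹ (1 − x)) + d R₀(x), where R₀ satisfies −d R₀'' + b R₀' = F₀ on (0,1) with R₀(1) = 0 and |R₀(0)| ≤ c. -/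
/-- three-term decomposition of the solution of
`−d φ'' + b φ' = s`, `φ(0) = φ_L`, `φ(1) = φ_R`:
`φ(x) = A₀(x) + B₀ exp(−b d⁻¹ (1−x)) + d R₀(x)` with `A₀ ∈ C^{m+1}`,
`F₀ ∈ C^{m−1}` and `c > 0` independent of `d`, where
`−d R₀'' + b R₀' = F₀`, `R₀(1) = 0` and `|R₀(0)| ≤ c`. -/
theorem cfs_three_term_decomposition (b : ℝ) (hb : 0 < b)
    (m : ℕ) (hm : 1 ≤ m) (s : ℝ → ℝ) (hs : ContDiff ℝ (m : ℕ∞) s) (φL φR : ℝ) :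
    ∃ A₀ : ℝ → ℝ, ContDiff ℝ ((m + 1 : ℕ) : ℕ∞) A₀ ∧
    ∃ B₀ : ℝ, ∃ F₀ : ℝ → ℝ, ContDiff ℝ ((m - 1 : ℕ) : ℕ∞) F₀ ∧
    ∃ c > (0 : ℝ), ∀ d ∈ Set.Ioc (0 : ℝ) 1,
      ∀ φ : ℝ → ℝ, ContDiff ℝ 2 φ →
        (∀ x ∈ Set.Ioo (0 : ℝ) 1, -d * iteratedDeriv 2 φ x + b * deriv φ x = s x) →
        φ 0 = φL → φ 1 = φR →
        ∃ R₀ : ℝ → ℝ, ContDiff ℝ 2 R₀ ∧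
          (∀ x ∈ Set.Icc (0 : ℝ) 1,
            φ x = A₀ x + B₀ * Real.exp (-(b / d) * (1 - x)) + d * R₀ x) ∧
          (∀ x ∈ Set.Ioo (0 : ℝ) 1,
            -d * iteratedDeriv 2 R₀ x + b * deriv R₀ x = F₀ x) ∧
          R₀ 1 = 0 ∧ |R₀ 0| ≤ c := by
  obtain ⟨k, rfl⟩ : ∃ k, m = k + 1 := ⟨m - 1, (Nat.succ_pred_eq_of_pos hm).symm⟩
  have hb' : b ≠ 0 := ne_of_gt hb
  have hscont : Continuous s := hs.continuous
  set A₀ : ℝ → ℝ := fun x => φL + b⁻¹ * ∫ t in (0:ℝ)..x, s t with hA₀def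
  have dA : ∀ x : ℝ, HasDerivAt A₀ (b⁻¹ * s x) x := fun x =>
    (((hscont.integral_hasStrictDerivAt 0 x).hasDerivAt).const_mul b⁻¹).const_add φL
  have derivA : deriv A₀ = fun x => b⁻¹ * s x := funext fun x => (dA x).deriv
  have hA₀cd : ContDiff ℝ ((k + 1 + 1 : ℕ) : ℕ∞) A₀ := by
    have : ContDiff ℝ (((k + 1 : ℕ) : ℕ∞) + 1) A₀ := by
      rw [contDiff_succ_iff_deriv]
      refine ⟨fun x => (dA x).differentiableAt, by simp, ?_⟩
      rw [derivA]
      exact contDiff_const.mul hs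
    exact_mod_cast this
  have hsd : Differentiable ℝ s :=
    hs.differentiable (by simp)
  have hs'cd : ContDiff ℝ ((k : ℕ∞)) (deriv s) := by
    have : ContDiff ℝ (((k : ℕ∞)) + 1) s := by exact_mod_cast hs
    exact (contDiff_succ_iff_deriv.mp this).2.2
  refine ⟨A₀, hA₀cd, φR - A₀ 1, fun x => b⁻¹ * deriv s x, ?_, |φR - A₀ 1| / b + 1, by positivity,
    ?_⟩
  · simpa using contDiff_const.mul hs'cd
  intro d hd φ hφ hode hφ0 hφ1
  have hd0 : (0:ℝ) < d := hd.1
  have hdne : d ≠ 0 := ne_of_gt hd0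
  set B₀ : ℝ := φR - A₀ 1 with hB₀def
  set E : ℝ → ℝ := fun x => Real.exp (-(b/d)*(1-x)) with hEdef
  have hEd : ∀ x, HasDerivAt E ((b/d) * E x) x := by
    intro x
    have h1 : HasDerivAt (fun y : ℝ => -(b/d)*(1-y)) (b/d) x := by
      simpa using ((hasDerivAt_id x).const_sub (1:ℝ)).const_mul (-(b/d))
    simpa [hEdef, neg_mul, mul_comm] using h1.exp
  have hEcd : ContDiff ℝ 2 E :=
    Real.contDiff_exp.comp (contDiff_const.mul (contDiff_const.sub contDiff_id)) |>.of_le le_top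
  set R₀ : ℝ → ℝ := fun x => d⁻¹ * (φ x - A₀ x - B₀ * E x) with hR₀def
  have hφd : Differentiable ℝ φ := hφ.differentiable (by norm_num)
  have hφ'cd : ContDiff ℝ 1 (deriv φ) := by
    have h2 : ContDiff ℝ ((1 : WithTop ℕ∞) + 1) φ := by norm_num; exact hφ
    exact (contDiff_succ_iff_deriv.mp h2).2.2
  have hφ'd : Differentiable ℝ (deriv φ) := hφ'cd.differentiable one_ne_zero
  have hR1 : ∀ x, HasDerivAt R₀ (d⁻¹ * (deriv φ x - b⁻¹ * s x - B₀ * ((b/d) * E x))) x :=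
    fun x => ((((hφd x).hasDerivAt.sub (dA x)).sub ((hEd x).const_mul B₀)).const_mul d⁻¹)
  have derivR : deriv R₀ = fun x => d⁻¹ * (deriv φ x - b⁻¹ * s x - B₀ * ((b/d) * E x)) :=
    funext fun x => (hR1 x).deriv
  have hR2 : ∀ x, HasDerivAt (deriv R₀)
      (d⁻¹ * (deriv (deriv φ) x - b⁻¹ * deriv s x - B₀ * ((b/d) * ((b/d) * E x)))) x := by
    intro x
    rw [derivR]
    exact ((((hφ'd x).hasDerivAt.sub ((hsd x).hasDerivAt.const_mul b⁻¹)).sub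
      (((hEd x).const_mul (b/d)).const_mul B₀)).const_mul d⁻¹)
  have hiter : ∀ g : ℝ → ℝ, iteratedDeriv 2 g = deriv (deriv g) := by
    intro g
    rw [show (2:ℕ) = 1 + 1 from rfl, iteratedDeriv_succ, iteratedDeriv_one]
  have hA2 : ContDiff ℝ 2 A₀ := hA₀cd.of_le (by
    simp
    calc (2 : WithTop ℕ∞) = 0 + 2 := (zero_add 2).symm
      _ ≤ ↑k + 2 := by gcongr <;> exact zero_le
      _ = ↑k + 1 + 1 := by rw [add_assoc, one_add_one_eq_two])
  refine ⟨R₀, ?_, ?_, ?_, ?_, ?_⟩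
  · exact contDiff_const.mul ((hφ.sub hA2).sub (contDiff_const.mul hEcd))
  · intro x _
    show φ x = A₀ x + B₀ * E x + d * R₀ x
    rw [hR₀def]
    field_simp
    ring
  · intro x hx
    have hphi := hode x hx
    rw [hiter] at hphi
    have hS : s x = -d * deriv (deriv φ) x + b * deriv φ x := hphi.symm
    rw [hiter, (hR2 x).deriv, (hR1 x).deriv]
    show _ = b⁻¹ * deriv s x
    rw [hS]
    field_simp
    ring
  · show d⁻¹ * (φ 1 - A₀ 1 - B₀ * E 1) = 0
    simp [hEdef, hφ1, hB₀def]
  · have hE0 : E 0 = Real.exp (-(b/d)) := by simp [hEdef]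
    have hA0 : A₀ 0 = φL := by simp [hA₀def]
    have hR0 : R₀ 0 = -(d⁻¹ * (B₀ * Real.exp (-(b/d)))) := by
      show d⁻¹ * (φ 0 - A₀ 0 - B₀ * E 0) = _
      rw [hE0, hA0, hφ0]; ring
    have hkey : Real.exp (-(b/d)) ≤ d / b := by
      have h1 : b / d ≤ Real.exp (b / d) :=
        le_trans (le_add_of_nonneg_right zero_le_one) (Real.add_one_le_exp _)
      have h2 : (0:ℝ) < b / d := by positivity
      rw [Real.exp_neg]
      calc (Real.exp (b/d))⁻¹ ≤ (b/d)⁻¹ := by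
            exact inv_anti₀ h2 h1
        _ = d / b := by rw [inv_div]
      done
    have habs : |R₀ 0| = |B₀| * (d⁻¹ * Real.exp (-(b/d))) := by
      rw [hR0, abs_neg, abs_mul, abs_mul, abs_of_pos (inv_pos.mpr hd0),
        abs_of_pos (Real.exp_pos _)]
      ring
    rw [habs]
    have : d⁻¹ * Real.exp (-(b/d)) ≤ 1 / b := by
      calc d⁻¹ * Real.exp (-(b/d)) ≤ d⁻¹ * (d / b) :=
            mul_le_mul_of_nonneg_left hkey (le_of_lt (inv_pos.mpr hd0))
        _ = 1 / b := by field_simp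
    calc |B₀| * (d⁻¹ * Real.exp (-(b/d))) ≤ |B₀| * (1 / b) :=
          mul_le_mul_of_nonneg_left this (abs_nonneg _)
      _ = |B₀| / b := by ring
      _ ≤ |φR - A₀ 1| / b + 1 := by rw [hB₀def]; linarith
end

section
/- Integral representation of the flux: let a < c, set m = (a+c)/2, and let b, s : [a,c] → ℝ be continuous with diffusion coefficient D(x) = ε + μ b(x) continuous and strictly positive on [a,c], where ε > 0 and μ ≥ 0 are constants. Define λ = b/D, Λ(x) = ∫_m^x λ(ξ) dξ and S(x) = ∫_m^x s(ξ) dξ. Suppose φ ∈ C¹([a,c]) is such that the flux f := b φ − D φ' is differentiable with f' = s on (a,c), and write φ_a = φ(a), φ_c = φ(c). Then f(m) = (φ_a e^{−Λ(a)} − φ_c e^{−Λ(c)}) / ∫_a^c D(x)⁻¹ e^{−Λ(x)} dx − ( ∫_a^c D(x)⁻¹ e^{−Λ(x)} S(x) dx ) / ∫_a^c D(x)⁻¹ e^{−Λ(x)} dx. -/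
open intervalIntegral

/-- integral representation of the flux at the midpoint
`m = (a+c)/2`: with `D = ε + μ b`, `λ = b/D`, `Λ(x) = ∫_m^x λ`,
`S(x) = ∫_m^x s`, and `f = b φ − D φ'` satisfying `f' = s` on `(a,c)`,
`f(m) = (φ(a) e^{−Λ(a)} − φ(c) e^{−Λ(c)}) / ∫_a^c D⁻¹ e^{−Λ}
        − (∫_a^c D⁻¹ e^{−Λ} S) / ∫_a^c D⁻¹ e^{−Λ}`. -/
theorem flux_integral_representation (a c ε μ : ℝ) (hac : a < c)
    (hε : 0 < ε) (hμ : 0 ≤ μ)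
    (bf s : ℝ → ℝ)
    (hbf : ContinuousOn bf (Set.Icc a c)) (hscont : ContinuousOn s (Set.Icc a c))
    (hD : ∀ x ∈ Set.Icc a c, 0 < ε + μ * bf x)
    (φ : ℝ → ℝ) (hφ : ContDiff ℝ 1 φ)
    (hflux : ∀ x ∈ Set.Ioo a c,
      HasDerivAt (fun t => bf t * φ t - (ε + μ * bf t) * deriv φ t) (s x) x) :
    let m := (a + c) / 2
    let Λ : ℝ → ℝ := fun x => ∫ ξ in m..x, bf ξ / (ε + μ * bf ξ)
    let S : ℝ → ℝ := fun x => ∫ ξ in m..x, s ξ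
    bf m * φ m - (ε + μ * bf m) * deriv φ m =
      (φ a * Real.exp (-Λ a) - φ c * Real.exp (-Λ c)) /
        (∫ x in a..c, (ε + μ * bf x)⁻¹ * Real.exp (-Λ x)) -
      (∫ x in a..c, (ε + μ * bf x)⁻¹ * Real.exp (-Λ x) * S x) /
        (∫ x in a..c, (ε + μ * bf x)⁻¹ * Real.exp (-Λ x)) := by
  intro m Λ S
  have hIcc_eq : Set.Icc a c = Set.uIcc a c := (Set.uIcc_of_le hac.le).symm
  have hm : m ∈ Set.Ioo a c := ⟨by simp only [m]; linarith, by simp only [m]; linarith⟩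
  have hmIcc : m ∈ Set.Icc a c := Set.Ioo_subset_Icc_self hm
  set D : ℝ → ℝ := fun x => ε + μ * bf x with hDdef
  have hDc : ContinuousOn D (Set.Icc a c) :=
    continuousOn_const.add (continuousOn_const.mul hbf)
  have hDne : ∀ x ∈ Set.Icc a c, D x ≠ 0 := fun x hx => (hD x hx).ne'
  set lam : ℝ → ℝ := fun x => bf x / D x with hlamdef
  have hlamc : ContinuousOn lam (Set.Icc a c) := hbf.div hDc hDne
  -- integrability helpers
  have hsubI : ∀ u ∈ Set.Icc a c, ∀ v ∈ Set.Icc a c, Set.uIcc u v ⊆ Set.Icc a c :=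
    fun u hu v hv => Set.uIcc_subset_Icc hu hv
  have hlamint : ∀ u ∈ Set.Icc a c, ∀ v ∈ Set.Icc a c,
      IntervalIntegrable lam MeasureTheory.volume u v :=
    fun u hu v hv => (hlamc.mono (hsubI u hu v hv)).intervalIntegrable
  have hsint : ∀ u ∈ Set.Icc a c, ∀ v ∈ Set.Icc a c,
      IntervalIntegrable s MeasureTheory.volume u v :=
    fun u hu v hv => (hscont.mono (hsubI u hu v hv)).intervalIntegrable
  -- continuity of Λ and S on Icc
  have hΛc : ContinuousOn Λ (Set.Icc a c) := by
    rw [hIcc_eq]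
    exact intervalIntegral.continuousOn_primitive_interval'
      (hlamint a (Set.left_mem_Icc.2 hac.le) c (Set.right_mem_Icc.2 hac.le))
      (hIcc_eq ▸ hmIcc)
  have hSc : ContinuousOn S (Set.Icc a c) := by
    rw [hIcc_eq]
    exact intervalIntegral.continuousOn_primitive_interval'
      (hsint a (Set.left_mem_Icc.2 hac.le) c (Set.right_mem_Icc.2 hac.le))
      (hIcc_eq ▸ hmIcc)
  -- derivative of Λ at interior points
  have hΛderiv : ∀ x ∈ Set.Ioo a c, HasDerivAt Λ (lam x) x := by
    intro x hx
    have hcontAt : ContinuousAt lam x :=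
      hlamc.continuousAt (Icc_mem_nhds hx.1 hx.2)
    exact intervalIntegral.integral_hasDerivAt_right
      (hlamint m hmIcc x (Set.Ioo_subset_Icc_self hx))
      ((hlamc.mono Set.Ioo_subset_Icc_self).stronglyMeasurableAtFilter isOpen_Ioo x hx)
      hcontAt
  -- key: flux = K + S on Ioo
  set K : ℝ := bf m * φ m - D m * deriv φ m with hKdef
  have hfS : ∀ x ∈ Set.Ioo a c, bf x * φ x - D x * deriv φ x = K + S x := by
    intro x hx
    have hsubm : Set.uIcc m x ⊆ Set.Ioo a c :=
      Set.Icc_subset_Ioo (lt_min hm.1 hx.1) (max_lt hm.2 hx.2)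
    have h1 : ∫ t in m..x, s t =
        (bf x * φ x - D x * deriv φ x) - (bf m * φ m - D m * deriv φ m) :=
      intervalIntegral.integral_eq_sub_of_hasDerivAt
        (fun t ht => hflux t (hsubm ht))
        (hsint m hmIcc x (Set.Ioo_subset_Icc_self hx))
    have h2 : S x = ∫ t in m..x, s t := rfl
    rw [h2, h1, hKdef]; ring
  -- derivative of g = φ * exp(-Λ)
  set w : ℝ → ℝ := fun x => (D x)⁻¹ * Real.exp (-Λ x) with hwdef
  have hwc : ContinuousOn w (Set.Icc a c) :=
    (hDc.inv₀ hDne).mul ((hΛc.neg).rexp)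
  have hφd : Differentiable ℝ φ := hφ.differentiable one_ne_zero
  have hφ'c : Continuous (deriv φ) := (hφ.iterate_deriv' 0 1).continuous
  set g : ℝ → ℝ := fun x => φ x * Real.exp (-Λ x) with hgdef
  have hgc : ContinuousOn g (Set.Icc a c) :=
    (hφ.continuous.continuousOn).mul ((hΛc.neg).rexp)
  have hgderiv : ∀ x ∈ Set.Ioo a c, HasDerivAt g (-(w x * (K + S x))) x := by
    intro x hx
    have hxIcc : x ∈ Set.Icc a c := Set.Ioo_subset_Icc_self hx
    have hDx : D x ≠ 0 := hDne x hxIcc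
    have hE : HasDerivAt (fun t => Real.exp (-Λ t)) (-(lam x) * Real.exp (-Λ x)) x := by
      have := (((hΛderiv x hx).neg).exp)
      simpa [mul_comm] using this
    have hg' : HasDerivAt g
        (deriv φ x * Real.exp (-Λ x) + φ x * (-(lam x) * Real.exp (-Λ x))) x :=
      (hφd.differentiableAt.hasDerivAt).mul hE
    convert hg' using 1
    have hfx := hfS x hx
    have hdphi : deriv φ x = (bf x * φ x - (K + S x)) / D x := by
      field_simp
      linarith [hfx]
    rw [hdphi]
    simp only [hwdef, hlamdef]
    field_simp
    ring
  -- integrate g' over [a,c]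
  have hwint : IntervalIntegrable w MeasureTheory.volume a c :=
    (hwc.mono (hIcc_eq ▸ subset_rfl)).intervalIntegrable
  have hwSint : IntervalIntegrable (fun x => w x * S x) MeasureTheory.volume a c :=
    ((hwc.mul hSc).mono (hIcc_eq ▸ subset_rfl)).intervalIntegrable
  have hg'int : IntervalIntegrable (fun x => -(w x * (K + S x))) MeasureTheory.volume a c := by
    have : ContinuousOn (fun x => -(w x * (K + S x))) (Set.Icc a c) :=
      ((hwc.mul (continuousOn_const.add hSc)).neg)
    exact (this.mono (hIcc_eq ▸ subset_rfl)).intervalIntegrable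
  have hFTC : ∫ x in a..c, -(w x * (K + S x)) = g c - g a :=
    intervalIntegral.integral_eq_sub_of_hasDerivAt_of_le hac.le hgc hgderiv hg'int
  have hsplit : ∫ x in a..c, -(w x * (K + S x)) =
      -(K * ∫ x in a..c, w x) - ∫ x in a..c, w x * S x := by
    have h1 : ∀ x, -(w x * (K + S x)) = -(K * w x) - w x * S x := fun x => by ring
    simp_rw [h1]
    have hA : IntervalIntegrable (fun x => -(K * w x)) MeasureTheory.volume a c := by
      exact (hwint.const_mul K).neg
    rw [intervalIntegral.integral_sub hA hwSint,
      intervalIntegral.integral_neg, intervalIntegral.integral_const_mul]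
  -- positivity of the denominator
  have hIpos : 0 < ∫ x in a..c, w x := by
    apply intervalIntegral.intervalIntegral_pos_of_pos_on hwint _ hac
    intro x hx
    have hxIcc : x ∈ Set.Icc a c := Set.Ioo_subset_Icc_self hx
    exact mul_pos (inv_pos.2 (hD x hxIcc)) (Real.exp_pos _)
  -- conclude
  have hmain : K * ∫ x in a..c, w x =
      (φ a * Real.exp (-Λ a) - φ c * Real.exp (-Λ c)) - ∫ x in a..c, w x * S x := by
    have := hFTC.symm.trans hsplit
    simp only [hgdef] at this
    linarith
  have hgoal : K = ((φ a * Real.exp (-Λ a) - φ c * Real.exp (-Λ c)) -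
      ∫ x in a..c, w x * S x) / ∫ x in a..c, w x := by
    field_simp
    linarith [hmain]
  show bf m * φ m - D m * deriv φ m =
      (φ a * Real.exp (-Λ a) - φ c * Real.exp (-Λ c)) / (∫ x in a..c, w x) -
      (∫ x in a..c, w x * S x) / ∫ x in a..c, w x
  rw [hKdef] at hgoal
  rw [hgoal, sub_div]
end

section
/- Constant-coefficient flux formula: let a < c, h = c − a, m = (a+c)/2, and let ε > 0, μ ≥ 0, b ≠ 0 and s be constants with d = ε + μ b > 0; set P = b h / d. If φ ∈ C²([a,c]) satisfies −d φ'' + b φ' = s on (a,c), then the flux f = b φ − d φ' at the midpoint satisfies f(m) = (d/h) [ B(−P) φ(a) − B(P) φ(c) ] + ( 1/2 − W(P) ) s h, where B(z) = z/(e^z − 1) is the Bernoulli function and W(z) = (e^z − 1 − z)/(z(e^z − 1)) is the weight function. -/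
set_option maxHeartbeats 1000000 in
lemma key_flux_alg (b d s a c C K E Ea Em : ℝ) (hb : b ≠ 0) (hd : d ≠ 0)
    (hca : c - a ≠ 0) (hP0 : b * (c - a) / d ≠ 0)
    (hE1 : E - 1 ≠ 0) (hE1' : E⁻¹ - 1 ≠ 0) (hE0 : E ≠ 0) :
    b * (C + s / b * ((a + c) / 2) + K / (b / d) * Em) - d * (s / b + K * Em) =
      d / (c - a) *
        (-(b * (c - a) / d) / (E⁻¹ - 1) * (C + s / b * a + K / (b / d) * Ea) -
          b * (c - a) / d / (E - 1) * (C + s / b * c + K / (b / d) * (E * Ea))) +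
      (1 / 2 - (E - 1 - b * (c - a) / d) / (b * (c - a) / d * (E - 1))) * s * (c - a) := by
  have hE1'' : 1 - E ≠ 0 := by intro hcon; apply hE1; linarith
  rw [div_div_eq_mul_div, div_mul_eq_mul_div, inv_eq_one_div]
  field_simp
  ring


/-- constant-coefficient flux formula: if `−d φ'' + b φ' = s` on
`(a,c)` with constants `d = ε + μ b > 0`, `b ≠ 0`, `s`, then the flux
`f = b φ − d φ'` at the midpoint `m = (a+c)/2` satisfies
`f(m) = (d/h)[B(−P) φ(a) − B(P) φ(c)] + (1/2 − W(P)) s h`, `P = b h / d`. -/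
theorem flux_constant_coefficients (a c ε μ b s : ℝ) (hac : a < c)
    (hε : 0 < ε) (hμ : 0 ≤ μ) (hb : b ≠ 0) (hd : 0 < ε + μ * b)
    (φ : ℝ → ℝ) (hφ : ContDiff ℝ 2 φ)
    (hode : ∀ x ∈ Set.Ioo a c,
      -(ε + μ * b) * iteratedDeriv 2 φ x + b * deriv φ x = s) :
    let d := ε + μ * b
    let h := c - a
    let m := (a + c) / 2
    let P := b * h / d
    b * φ m - d * deriv φ m =
      d / h * (Bern (-P) * φ a - Bern P * φ c) + (1 / 2 - Wt P) * s * h := by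
  intro d h m P
  have hd_def : d = ε + μ * b := rfl
  have hh_def : h = c - a := rfl
  have hm_def : m = (a + c) / 2 := rfl
  have hP_def : P = b * h / d := rfl
  have hd0 : d ≠ 0 := ne_of_gt hd
  have hh0 : h ≠ 0 := by rw [hh_def]; linarith
  set β := b / d with hβ
  have hβ0 : β ≠ 0 := div_ne_zero hb hd0
  -- smoothness facts
  have hφ2 : ContDiff ℝ (1 + 1 : WithTop ℕ∞) φ := by norm_num; exact hφ
  have hφ1 : ContDiff ℝ 1 (deriv φ) := (contDiff_succ_iff_deriv.mp hφ2).2.2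
  have hdφ : Differentiable ℝ (deriv φ) := (contDiff_one_iff_deriv.mp hφ1).1
  have hcont2 : Continuous (deriv (deriv φ)) := (contDiff_one_iff_deriv.mp hφ1).2
  have hdφ0 : Differentiable ℝ φ := hφ.differentiable (by norm_num)
  -- ODE on the closed interval
  have hodeIcc : ∀ x ∈ Set.Icc a c, -d * deriv (deriv φ) x + b * deriv φ x = s := by
    have hiter : iteratedDeriv 2 φ = deriv (deriv φ) := by
      simp [iteratedDeriv_succ, iteratedDeriv_one, show (2:ℕ) = 1 + 1 from rfl]
    have heq : Set.EqOn (fun x => -d * deriv (deriv φ) x + b * deriv φ x)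
        (fun _ => s) (Set.Ioo a c) := by
      intro x hx
      have := hode x hx
      rw [hiter] at this
      show -d * deriv (deriv φ) x + b * deriv φ x = s
      rw [hd_def]; linarith
    have hcl : Set.EqOn (fun x => -d * deriv (deriv φ) x + b * deriv φ x)
        (fun _ => s) (Set.Icc a c) := by
      rw [← closure_Ioo (ne_of_lt hac)]
      exact heq.closure ((continuous_const.mul hcont2).add (continuous_const.mul hdφ.continuous)) continuous_const
    exact fun x hx => hcl hx
  have hφ'' : ∀ x ∈ Set.Icc a c, deriv (deriv φ) x = β * deriv φ x - s / d := by
    intro x hx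
    have := hodeIcc x hx
    rw [hβ]
    field_simp
    linarith
  -- constancy of k x = exp(-(βx)) (φ' x - s/b)
  set K := (deriv φ m - s / b) * Real.exp (-(β * m)) with hK
  set k : ℝ → ℝ := fun x => Real.exp (-(β * x)) * (deriv φ x - s / b) with hk
  have hkderiv : ∀ x ∈ Set.Icc a c, HasDerivAt k 0 x := by
    intro x hx
    have h1 : HasDerivAt (fun x => Real.exp (-(β * x)))
        (Real.exp (-(β * x)) * -β) x := by
      simpa using (((hasDerivAt_id x).const_mul β).neg).exp
    have h2 : HasDerivAt (fun x => deriv φ x - s / b) (deriv (deriv φ) x) x :=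
      ((hdφ x).hasDerivAt).sub_const _
    have h3 := h1.mul h2
    refine h3.congr_deriv ?_
    rw [hφ'' x hx, hβ]
    field_simp
    ring
  have hkconst : ∀ x ∈ Set.Icc a c, k x = k a := by
    apply constant_of_has_deriv_right_zero
    · exact fun x hx => (hkderiv x hx).continuousAt.continuousWithinAt
    · exact fun x hx => ((hkderiv x (Set.mem_Icc_of_Ico hx)).hasDerivWithinAt)
  have hmIcc : m ∈ Set.Icc a c := by constructor <;> (rw [hm_def]; linarith)
  have hkm : k m = K := by rw [hk, hK]; ring
  have hφ' : ∀ x ∈ Set.Icc a c, deriv φ x = s / b + K * Real.exp (β * x) := by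
    intro x hx
    have h1 : k x = K := by rw [hkconst x hx, ← hkconst m hmIcc, hkm]
    rw [hk] at h1
    simp only [Real.exp_neg] at h1
    have hne : Real.exp (β * x) ≠ 0 := Real.exp_ne_zero _
    field_simp at h1 ⊢
    linarith
  -- constancy of g x = φ x - (s/b) x - (K/β) exp (βx)
  set g : ℝ → ℝ := fun x => φ x - s / b * x - K / β * Real.exp (β * x) with hg
  have hgderiv : ∀ x ∈ Set.Icc a c, HasDerivAt g 0 x := by
    intro x hx
    have h1 : HasDerivAt (fun x => Real.exp (β * x)) (Real.exp (β * x) * β) x := by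
      simpa using ((hasDerivAt_id x).const_mul β).exp
    have h2 : HasDerivAt g
        (deriv φ x - (s / b * 1) - K / β * (Real.exp (β * x) * β)) x :=
      (((hdφ0 x).hasDerivAt).sub ((hasDerivAt_id x).const_mul (s / b))).sub
        (h1.const_mul (K / β))
    convert h2 using 1
    rw [hφ' x hx]
    field_simp
    ring
  have hgconst : ∀ x ∈ Set.Icc a c, g x = g a := by
    apply constant_of_has_deriv_right_zero
    · exact fun x hx => (hgderiv x hx).continuousAt.continuousWithinAt
    · exact fun x hx => ((hgderiv x (Set.mem_Icc_of_Ico hx)).hasDerivWithinAt)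
  set C := g a with hC
  have haIcc : a ∈ Set.Icc a c := Set.left_mem_Icc.mpr (le_of_lt hac)
  have hcIcc : c ∈ Set.Icc a c := Set.right_mem_Icc.mpr (le_of_lt hac)
  have eA : φ a = C + s / b * a + K / β * Real.exp (β * a) := by
    have := hgconst a haIcc; rw [hg] at this; simp only at this; linarith [this]
  have eC : φ c = C + s / b * c + K / β * Real.exp (β * c) := by
    have := hgconst c hcIcc; rw [hg] at this
    have h2 := eA
    simp only at this
    nlinarith [this, eA]
  have eM : φ m = C + s / b * m + K / β * Real.exp (β * m) := by
    have := hgconst m hmIcc; rw [hg] at this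
    simp only at this
    nlinarith [this, eA]
  have eM' : deriv φ m = s / b + K * Real.exp (β * m) := hφ' m hmIcc
  -- exponential relations
  have hP0 : P ≠ 0 := by
    rw [hP_def]; exact div_ne_zero (mul_ne_zero hb hh0) hd0
  have hEc : Real.exp (β * c) = Real.exp P * Real.exp (β * a) := by
    rw [← Real.exp_add]; congr 1
    rw [hP_def, hh_def, hβ]; field_simp; ring
  have hE1 : Real.exp P - 1 ≠ 0 := by
    intro hcon
    have he : Real.exp P = Real.exp 0 := by rw [Real.exp_zero]; linarith
    exact hP0 (Real.exp_injective he)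
  have hE1'' : (Real.exp P)⁻¹ - 1 ≠ 0 := by
    rw [← Real.exp_neg]
    intro hcon
    have he : Real.exp (-P) = Real.exp 0 := by rw [Real.exp_zero]; linarith
    have := Real.exp_injective he
    exact hP0 (by linarith)
  have hEP0 : Real.exp P ≠ 0 := Real.exp_ne_zero _
  -- final algebra
  simp only [Bern, Wt]
  rw [eA, eC, eM, eM', hEc, Real.exp_neg, hP_def, hh_def, hm_def, hβ]
  exact key_flux_alg b d s a c C K (Real.exp (b * (c - a) / d))
    (Real.exp (b / d * a)) (Real.exp (b / d * ((a + c) / 2))) hb hd0 hh0 hP0 hE1 hE1'' hEP0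
end

section
/- Green's function representation of the inhomogeneous flux: let a < c, h = c − a, m = (a+c)/2, let ε > 0, μ ≥ 0 and b ≠ 0 be constants with d = ε + μ b > 0, set P = b h / d, and let s : [a,c] → ℝ be continuous. Define the flux Green's function G(σ; P) = (1 − e^{−Pσ})/(1 − e^{−P}) for 0 ≤ σ ≤ 1/2 and G(σ; P) = −(1 − e^{P(1−σ)})/(1 − e^{P}) for 1/2 < σ ≤ 1. If φ ∈ C²([a,c]) satisfies −d φ'' + b φ' = s on (a,c), then the flux f = b φ − d φ' at the midpoint satisfies f(m) − (d/h)[ B(−P) φ(a) − B(P) φ(c) ] = h ∫_0^1 G(σ; P) s(a + σ h) dσ, where B(z) = z/(e^z − 1). -/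
set_option maxHeartbeats 1000000 in
theorem flux_aux (a c b d h m P : ℝ)
    (hh : h = c - a) (hm : m = (a + c) / 2) (hP : P = b * h / d)
    (hac : a < c) (hd : 0 < d) (hb : b ≠ 0)
    (s : ℝ → ℝ) (hs : ContinuousOn s (Set.Icc a c))
    (φ : ℝ → ℝ) (hφ : ContDiff ℝ 2 φ)
    (hode : ∀ x ∈ Set.Ioo a c, -d * deriv (deriv φ) x + b * deriv φ x = s x) :
    (b * φ m - d * deriv φ m) - d / h * (Bern (-P) * φ a - Bern P * φ c) =
      h * ∫ σ in (0 : ℝ)..1,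
        (if σ ≤ 1 / 2 then (1 - Real.exp (-(P * σ))) / (1 - Real.exp (-P))
         else -((1 - Real.exp (P * (1 - σ))) / (1 - Real.exp P))) * s (a + σ * h) := by
  have hh0 : 0 < h := by rw [hh]; linarith
  have hhne : h ≠ 0 := ne_of_gt hh0
  have hdne : d ≠ 0 := ne_of_gt hd
  have hPne : P ≠ 0 := by
    rw [hP]; exact div_ne_zero (mul_ne_zero hb hhne) hdne
  have hq2 : 1 - Real.exp P ≠ 0 := by
    intro hcon
    have : Real.exp P = 1 := by linarith
    exact hPne ((Real.exp_eq_one_iff P).mp this)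
  have hq1 : 1 - Real.exp (-P) ≠ 0 := by
    intro hcon
    have : Real.exp (-P) = 1 := by linarith
    have := (Real.exp_eq_one_iff (-P)).mp this
    exact hPne (by linarith)
  set q₁ := 1 - Real.exp (-P) with hq₁def
  set q₂ := 1 - Real.exp P with hq₂def
  have ham : a < m := by rw [hm]; linarith
  have hmc : m < c := by rw [hm]; linarith
  -- differentiability facts
  have hφ2 : ContDiff ℝ (1 + 1) φ := by norm_num; exact hφ
  have hφdiff : Differentiable ℝ φ := hφ.differentiable (by norm_num)
  have hφ1 : ContDiff ℝ 1 (deriv φ) := (contDiff_succ_iff_deriv.mp hφ2).2.2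
  have hφ'diff : Differentiable ℝ (deriv φ) := hφ1.differentiable (by norm_num)
  have hφ'cont : Continuous (deriv φ) := hφ'diff.continuous
  -- the Green pieces
  set g₁ : ℝ → ℝ := fun x => (1 - Real.exp (-(P * ((x - a) / h)))) / q₁ with hg₁
  set g₂ : ℝ → ℝ := fun x => -((1 - Real.exp (P * (1 - (x - a) / h))) / q₂) with hg₂
  set W₁ : ℝ → ℝ := fun x =>
    g₁ x * (b * φ x - d * deriv φ x) + b / q₁ * Real.exp (-(P * ((x - a) / h))) * φ x with hW₁
  set W₂ : ℝ → ℝ := fun x =>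
    g₂ x * (b * φ x - d * deriv φ x) - b / q₂ * Real.exp (P * (1 - (x - a) / h)) * φ x with hW₂
  have hbPd : b = P * d / h := by rw [hP]; field_simp
  -- derivative of W₁
  have hW₁deriv : ∀ x ∈ Set.Ioo a c, HasDerivAt W₁ (g₁ x * s x) x := by
    intro x hx
    have hsx := hode x hx
    have hφd : HasDerivAt φ (deriv φ x) x := (hφdiff x).hasDerivAt
    have hφdd : HasDerivAt (deriv φ) (deriv (deriv φ) x) x := (hφ'diff x).hasDerivAt
    have hlin : HasDerivAt (fun y : ℝ => -(P * ((y - a) / h))) (-(P * (1 / h))) x :=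
      ((((hasDerivAt_id x).sub_const a).div_const h).const_mul P).neg
    have hE : HasDerivAt (fun y : ℝ => Real.exp (-(P * ((y - a) / h))))
        (Real.exp (-(P * ((x - a) / h))) * -(P * (1 / h))) x := hlin.exp
    have h1 : HasDerivAt (fun y : ℝ => (1 - Real.exp (-(P * ((y - a) / h)))) / q₁)
        ((0 - Real.exp (-(P * ((x - a) / h))) * -(P * (1 / h))) / q₁) x :=
      ((hasDerivAt_const x (1:ℝ)).sub hE).div_const q₁
    have h2 : HasDerivAt (fun y : ℝ => b * φ y - d * deriv φ y)
        (b * deriv φ x - d * deriv (deriv φ) x) x :=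
      (hφd.const_mul b).sub (hφdd.const_mul d)
    have h3 := h1.mul h2
    have h4 := (hE.const_mul (b / q₁)).mul hφd
    have h5 := h3.add h4
    refine h5.congr_deriv ?_
    rw [← hsx, hbPd]
    ring
  have hW₂deriv : ∀ x ∈ Set.Ioo a c, HasDerivAt W₂ (g₂ x * s x) x := by
    intro x hx
    have hsx := hode x hx
    have hφd : HasDerivAt φ (deriv φ x) x := (hφdiff x).hasDerivAt
    have hφdd : HasDerivAt (deriv φ) (deriv (deriv φ) x) x := (hφ'diff x).hasDerivAt
    have hlin : HasDerivAt (fun y : ℝ => P * (1 - (y - a) / h)) (P * (0 - 1 / h)) x :=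
      (((hasDerivAt_const x (1:ℝ)).sub (((hasDerivAt_id x).sub_const a).div_const h)).const_mul P)
    have hE : HasDerivAt (fun y : ℝ => Real.exp (P * (1 - (y - a) / h)))
        (Real.exp (P * (1 - (x - a) / h)) * (P * (0 - 1 / h))) x := hlin.exp
    have h1 : HasDerivAt (fun y : ℝ => -((1 - Real.exp (P * (1 - (y - a) / h))) / q₂))
        (-((0 - Real.exp (P * (1 - (x - a) / h)) * (P * (0 - 1 / h))) / q₂)) x :=
      (((hasDerivAt_const x (1:ℝ)).sub hE).div_const q₂).neg
    have h2 : HasDerivAt (fun y : ℝ => b * φ y - d * deriv φ y)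
        (b * deriv φ x - d * deriv (deriv φ) x) x :=
      (hφd.const_mul b).sub (hφdd.const_mul d)
    have h3 := h1.mul h2
    have h4 := (hE.const_mul (b / q₂)).mul hφd
    have h5 := h3.sub h4
    refine h5.congr_deriv ?_
    rw [← hsx, hbPd]
    ring
  -- continuity
  have hg₁cont : Continuous g₁ := by
    apply Continuous.div_const
    exact continuous_const.sub ((continuous_const.mul ((continuous_id.sub continuous_const).div_const h)).neg.rexp)
  have hg₂cont : Continuous g₂ := by
    apply Continuous.neg
    apply Continuous.div_const
    exact continuous_const.sub ((continuous_const.mul (continuous_const.sub ((continuous_id.sub continuous_const).div_const h))).rexp)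
  have hW₁cont : Continuous W₁ := by
    apply Continuous.add
    · exact hg₁cont.mul ((continuous_const.mul hφdiff.continuous).sub (continuous_const.mul hφ'cont))
    · exact ((continuous_const.mul ((continuous_const.mul ((continuous_id.sub continuous_const).div_const h)).neg.rexp)).mul hφdiff.continuous)
  have hW₂cont : Continuous W₂ := by
    apply Continuous.sub
    · exact hg₂cont.mul ((continuous_const.mul hφdiff.continuous).sub (continuous_const.mul hφ'cont))
    · exact (continuous_const.mul ((continuous_const.mul (continuous_const.sub ((continuous_id.sub continuous_const).div_const h))).rexp)).mul hφdiff.continuous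
  -- integrability
  have hint1 : IntervalIntegrable (fun x => g₁ x * s x) MeasureTheory.volume a m := by
    apply ContinuousOn.intervalIntegrable
    apply ContinuousOn.mul hg₁cont.continuousOn
    apply hs.mono
    rw [Set.uIcc_of_le (le_of_lt ham)]
    exact Set.Icc_subset_Icc le_rfl (le_of_lt hmc)
  have hint2 : IntervalIntegrable (fun x => g₂ x * s x) MeasureTheory.volume m c := by
    apply ContinuousOn.intervalIntegrable
    apply ContinuousOn.mul hg₂cont.continuousOn
    apply hs.mono
    rw [Set.uIcc_of_le (le_of_lt hmc)]
    exact Set.Icc_subset_Icc (le_of_lt ham) le_rfl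
  -- FTC on the two halves
  have hI1 : ∫ x in a..m, g₁ x * s x = W₁ m - W₁ a := by
    apply intervalIntegral.integral_eq_sub_of_hasDeriv_right_of_le (le_of_lt ham)
      hW₁cont.continuousOn
      (fun x hx => (hW₁deriv x ⟨hx.1, lt_trans hx.2 hmc⟩).hasDerivWithinAt) hint1
  have hI2 : ∫ x in m..c, g₂ x * s x = W₂ c - W₂ m := by
    apply intervalIntegral.integral_eq_sub_of_hasDeriv_right_of_le (le_of_lt hmc)
      hW₂cont.continuousOn
      (fun x hx => (hW₂deriv x ⟨lt_trans ham hx.1, hx.2⟩).hasDerivWithinAt) hint2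
  -- the combined integrand as a function of x
  set F : ℝ → ℝ := fun x =>
    (if (x - a) / h ≤ 1 / 2 then (1 - Real.exp (-(P * ((x - a) / h)))) / q₁
     else -((1 - Real.exp (P * (1 - (x - a) / h))) / q₂)) * s x with hF
  -- substitution
  have hsub : (∫ σ in (0:ℝ)..1,
      (if σ ≤ 1 / 2 then (1 - Real.exp (-(P * σ))) / q₁
       else -((1 - Real.exp (P * (1 - σ))) / q₂)) * s (a + σ * h)) = h⁻¹ * ∫ x in a..c, F x := by
    have heq : ∀ σ : ℝ,
        (if σ ≤ 1 / 2 then (1 - Real.exp (-(P * σ))) / q₁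
         else -((1 - Real.exp (P * (1 - σ))) / q₂)) * s (a + σ * h) = F (h * σ + a) := by
      intro σ
      have harg : (h * σ + a - a) / h = σ := by field_simp; ring
      have harg2 : a + σ * h = h * σ + a := by ring
      rw [hF]; simp only [harg, harg2]
    rw [intervalIntegral.integral_congr (g := fun σ => F (h * σ + a)) (fun σ _ => heq σ)]
    rw [intervalIntegral.integral_comp_mul_add F hhne a]
    rw [show h * 0 + a = a by ring, show h * 1 + a = c by rw [hh]; ring]
    simp [smul_eq_mul]
  -- split and identify the halves
  have hxm : ∀ x : ℝ, x ≤ m ↔ (x - a) / h ≤ 1 / 2 := by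
    intro x
    rw [div_le_div_iff₀ hh0 (by norm_num : (0:ℝ) < 2), hm, hh]
    constructor <;> intro <;> linarith
  have hFa : ∫ x in a..m, F x = ∫ x in a..m, g₁ x * s x := by
    apply intervalIntegral.integral_congr
    intro x hx
    rw [Set.uIcc_of_le (le_of_lt ham)] at hx
    rw [hF]
    simp only [if_pos ((hxm x).mp hx.2)]; rfl
  have hFb : ∫ x in m..c, F x = ∫ x in m..c, g₂ x * s x := by
    rw [intervalIntegral.integral_of_le (le_of_lt hmc),
        intervalIntegral.integral_of_le (le_of_lt hmc)]
    apply MeasureTheory.setIntegral_congr_fun measurableSet_Ioc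
    intro x hx
    have : ¬ ((x - a) / h ≤ 1 / 2) := by
      rw [← hxm x]; exact not_le.mpr hx.1
    rw [hF]; simp only [if_neg this]; rfl
  have hFint1 : IntervalIntegrable F MeasureTheory.volume a m := by
    rw [intervalIntegrable_iff_integrableOn_Ioc_of_le (le_of_lt ham)]
    apply MeasureTheory.IntegrableOn.congr_fun
      ((intervalIntegrable_iff_integrableOn_Ioc_of_le (le_of_lt ham)).mp hint1)
    · intro x hx
      rw [hF]; simp only [if_pos ((hxm x).mp hx.2)]; rfl
    · exact measurableSet_Ioc
  have hFint2 : IntervalIntegrable F MeasureTheory.volume m c := by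
    rw [intervalIntegrable_iff_integrableOn_Ioc_of_le (le_of_lt hmc)]
    apply MeasureTheory.IntegrableOn.congr_fun
      ((intervalIntegrable_iff_integrableOn_Ioc_of_le (le_of_lt hmc)).mp hint2)
    · intro x hx
      have : ¬ ((x - a) / h ≤ 1 / 2) := by rw [← hxm x]; exact not_le.mpr hx.1
      rw [hF]; simp only [if_neg this]; rfl
    · exact measurableSet_Ioc
  have hsplit : ∫ x in a..c, F x = (W₁ m - W₁ a) + (W₂ c - W₂ m) := by
    rw [← intervalIntegral.integral_add_adjacent_intervals hFint1 hFint2, hFa, hFb, hI1, hI2]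
  -- endpoint values
  have hcane : c - a ≠ 0 := by rw [← hh]; exact hhne
  have hma : (m - a) / h = 1 / 2 := by
    rw [div_eq_iff hhne, hm, hh]; ring
  have haa : (a - a) / h = 0 := by simp
  have hca : (c - a) / h = 1 := by rw [hh]; exact div_self hcane
  have e1 : W₁ a = b / q₁ * φ a := by simp [hW₁, hg₁, haa]
  have e2 : W₁ m = (1 - Real.exp (-(P * (1/2)))) / q₁ * (b * φ m - d * deriv φ m)
      + b / q₁ * Real.exp (-(P * (1/2))) * φ m := by
    simp only [hW₁, hg₁, hma]
  have e3 : W₂ c = -(b / q₂) * φ c := by simp [hW₂, hg₂, hca]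
  have e4 : W₂ m = -((1 - Real.exp (P * (1/2))) / q₂) * (b * φ m - d * deriv φ m)
      - b / q₂ * Real.exp (P * (1/2)) * φ m := by
    simp only [hW₂, hg₂, hma]
    norm_num
  -- final assembly
  rw [hsub, hsplit, ← mul_assoc, mul_inv_cancel₀ hhne, one_mul]
  rw [e1, e2, e3, e4, Bern, Bern]
  have hu : Real.exp P = Real.exp (P * (1/2)) * Real.exp (P * (1/2)) := by
    rw [← Real.exp_add]; ring_nf
  have hunp : Real.exp (-(P * (1/2))) = (Real.exp (P * (1/2)))⁻¹ := by
    rw [← Real.exp_neg]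
  have hun : Real.exp (-P) = (Real.exp (P * (1/2)) * Real.exp (P * (1/2)))⁻¹ := by
    rw [← hu, ← Real.exp_neg]
  rw [hq₁def, hq₂def, hu, hun, hunp]
  set u := Real.exp (P * (1/2)) with hudef
  have hu0 : u ≠ 0 := ne_of_gt (Real.exp_pos _)
  have huu1 : u * u - 1 ≠ 0 := by
    intro hcon
    apply hq2
    rw [hq₂def, hu]; linarith
  have huu1'' : u * u ≠ 1 := by intro hcon; exact huu1 (by linarith)
  have huu1' : 1 - (u * u)⁻¹ ≠ 0 := by
    intro hcon
    have h2 : (u * u)⁻¹ = 1 := by linarith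
    have huune : u * u ≠ 0 := mul_ne_zero hu0 hu0
    exact huu1'' (by rw [← inv_inv (u*u), h2, inv_one])
  have hq2' : 1 - u * u ≠ 0 := by intro hcon; exact huu1 (by linarith)
  have hq2s : 1 - u ^ 2 ≠ 0 := by rw [sq]; exact hq2'
  have huu1s : u ^ 2 - 1 ≠ 0 := by rw [sq]; exact huu1
  have huu1s' : -1 + u ^ 2 ≠ 0 := by rw [sq]; intro hcon; exact huu1 (by linarith)
  rw [hbPd]
  field_simp
  ring

/-- Green's function representation of the inhomogeneous flux:
if `−d φ'' + b φ' = s` on `(a,c)` with constants `d = ε + μ b > 0`, `b ≠ 0`,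
then the flux `f = b φ − d φ'` at the midpoint `m = (a+c)/2` satisfies
`f(m) − (d/h)[B(−P) φ(a) − B(P) φ(c)] = h ∫_0^1 G(σ;P) s(a + σ h) dσ`,
where `G(σ;P) = (1 − e^{−Pσ})/(1 − e^{−P})` for `0 ≤ σ ≤ 1/2` and
`G(σ;P) = −(1 − e^{P(1−σ)})/(1 − e^{P})` for `1/2 < σ ≤ 1`. -/
theorem flux_green_function (a c ε μ b : ℝ) (hac : a < c)
    (hε : 0 < ε) (hμ : 0 ≤ μ) (hb : b ≠ 0) (hd : 0 < ε + μ * b)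
    (s : ℝ → ℝ) (hs : ContinuousOn s (Set.Icc a c))
    (φ : ℝ → ℝ) (hφ : ContDiff ℝ 2 φ)
    (hode : ∀ x ∈ Set.Ioo a c,
      -(ε + μ * b) * iteratedDeriv 2 φ x + b * deriv φ x = s x) :
    let d := ε + μ * b
    let h := c - a
    let m := (a + c) / 2
    let P := b * h / d
    let G : ℝ → ℝ := fun σ =>
      if σ ≤ 1 / 2 then (1 - Real.exp (-(P * σ))) / (1 - Real.exp (-P))
      else -((1 - Real.exp (P * (1 - σ))) / (1 - Real.exp P))
    (b * φ m - d * deriv φ m) - d / h * (Bern (-P) * φ a - Bern P * φ c) =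
      h * ∫ σ in (0 : ℝ)..1, G σ * s (a + σ * h) := by
  intro d h m P G
  have hode' : ∀ x ∈ Set.Ioo a c,
      -(ε + μ * b) * deriv (deriv φ) x + b * deriv φ x = s x := by
    intro x hx
    have := hode x hx
    rwa [show iteratedDeriv 2 φ = deriv (deriv φ) by
      rw [show (2:ℕ) = 1 + 1 from rfl, iteratedDeriv_succ, iteratedDeriv_one]] at this
  exact flux_aux a c b (ε + μ * b) h m P rfl rfl rfl hac hd hb s hs φ hφ hode'
end

section
/- Exactness of the complete flux scheme on the layer function: let ε > 0, μ ≥ 0, b > 0, d = ε + μ b, h > 0, P = b h / d, and let a_W = d h⁻² B(−P), a_E = d h⁻² B(P), a_C = a_W + a_E, where B(z) = z/(e^z − 1). Then for the function y(x) = exp(b d⁻¹ x) (equivalently, for y(x) = exp(−b d⁻¹ (1 − x))) one has −a_W y(x − h) + a_C y(x) − a_E y(x + h) = 0 for every x ∈ ℝ; that is, the discrete operator L^h annihilates the exact solution of the homogeneous constant-coefficient equation −d φ'' + b φ' = 0. -/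
lemma cfs_key (b d h u : ℝ) (hd : 0 < d) (hb : 0 < b) (hh : 0 < h) :
    -cfsAW b d h * (u / Real.exp (b * h / d)) + cfsAC b d h * u
      - cfsAE b d h * (u * Real.exp (b * h / d)) = 0 := by
  have hP : 0 < b * h / d := by positivity
  set t := Real.exp (b * h / d) with htdef
  have ht : (1 : ℝ) < t := lt_of_lt_of_le (by linarith) (Real.add_one_le_exp _)
  have ht0 : t ≠ 0 := by positivity
  have ht1 : t - 1 ≠ 0 := sub_ne_zero.mpr ht.ne'
  have hinv : Real.exp (-(b * h / d)) = t⁻¹ := Real.exp_neg _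
  simp only [cfsAW, cfsAE, cfsAC, Bern, hinv]
  rw [← htdef]
  have hrw : t⁻¹ - 1 = (1 - t) / t := by field_simp
  have ht1' : (1 : ℝ) - t ≠ 0 := sub_ne_zero.mpr ht.ne
  have hh2 : (h : ℝ) ^ 2 ≠ 0 := by positivity
  rw [hrw]
  field_simp
  ring

/-- exactness of the complete flux scheme on the layer function:
the discrete operator `L^h` annihilates `y(x) = exp(b d⁻¹ x)` (equivalently
`y(x) = exp(−b d⁻¹ (1−x))`), the exact solution of `−d φ'' + b φ' = 0`. -/
theorem cfs_exact_on_layer (ε μ b h : ℝ) (hε : 0 < ε) (hμ : 0 ≤ μ)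
    (hb : 0 < b) (hh : 0 < h) :
    let d := ε + μ * b
    (∀ x : ℝ,
      -cfsAW b d h * Real.exp (b / d * (x - h)) + cfsAC b d h * Real.exp (b / d * x)
        - cfsAE b d h * Real.exp (b / d * (x + h)) = 0) ∧
    (∀ x : ℝ,
      -cfsAW b d h * Real.exp (-(b / d) * (1 - (x - h)))
        + cfsAC b d h * Real.exp (-(b / d) * (1 - x))
        - cfsAE b d h * Real.exp (-(b / d) * (1 - (x + h))) = 0) := by
  intro d
  have hd : 0 < d := by have : 0 ≤ μ * b := mul_nonneg hμ hb.le; positivity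
  constructor
  · intro x
    have e1 : b / d * (x - h) = b / d * x - b * h / d := by ring
    have e2 : b / d * (x + h) = b / d * x + b * h / d := by ring
    rw [e1, e2, Real.exp_sub, Real.exp_add]
    exact cfs_key b d h (Real.exp (b / d * x)) hd hb hh
  · intro x
    have e1 : -(b / d) * (1 - (x - h)) = -(b / d) * (1 - x) - b * h / d := by ring
    have e2 : -(b / d) * (1 - (x + h)) = -(b / d) * (1 - x) + b * h / d := by ring
    rw [e1, e2, Real.exp_sub, Real.exp_add]
    exact cfs_key b d h (Real.exp (-(b / d) * (1 - x))) hd hb hh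
end

section
/- Remainder estimate in the fine-mesh regime: define the Taylor remainder R_q(x₁, x₂; f) = (1/q!) ∫_{x₁}^{x₂} (x₂ − x)^q f^{(q+1)}(x) dx. Let b > 0 and c₂ > 0. Then there exists C > 0, depending only on b and c₂, such that for all d ∈ (0,1], all h with 0 < h ≤ d, all x ∈ [h, 1−h], and every function z ∈ C⁴([0,1]) with |z^{(4)}(t)| ≤ c₂ (1 + d⁻³ exp(−b d⁻¹ (1 − t))) on [0,1], one has, with P = b h / d and B(z) = z/(e^z − 1): d h⁻² B(−P) |R₃(x, x − h; z)| + d h⁻² B(P) |R₃(x, x + h; z)| ≤ C h² ( 1 + d⁻² exp(−b d⁻¹ (1 − x)) ). -/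
/-- Taylor remainder `R_q(x₁, x₂; f) = (1/q!) ∫_{x₁}^{x₂} (x₂ − x)^q f^{(q+1)}(x) dx`. -/
noncomputable def taylorR (q : ℕ) (x₁ x₂ : ℝ) (f : ℝ → ℝ) : ℝ :=
  (1 / (Nat.factorial q : ℝ)) * ∫ x in x₁..x₂, (x₂ - x) ^ q * iteratedDeriv (q + 1) f x

/-- remainder estimate in the fine-mesh regime `h ≤ d`:
if `|z⁽⁴⁾(t)| ≤ c₂ (1 + d⁻³ exp(−b d⁻¹ (1−t)))` on `[0,1]`, then
`d h⁻² B(−P) |R₃(x, x−h; z)| + d h⁻² B(P) |R₃(x, x+h; z)|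
   ≤ C h² (1 + d⁻² exp(−b d⁻¹ (1−x)))` with `C = C(b, c₂)`. -/
theorem remainder_estimate_fine_mesh (b c₂ : ℝ) (hb : 0 < b) (hc₂ : 0 < c₂) :
    ∃ C > (0 : ℝ), ∀ d ∈ Set.Ioc (0 : ℝ) 1, ∀ h : ℝ, 0 < h → h ≤ d →
      ∀ x ∈ Set.Icc h (1 - h), ∀ z : ℝ → ℝ, ContDiff ℝ 4 z →
        (∀ t ∈ Set.Icc (0 : ℝ) 1,
          |iteratedDeriv 4 z t| ≤ c₂ * (1 + d⁻¹ ^ 3 * Real.exp (-(b / d) * (1 - t)))) →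
        d / h ^ 2 * Bern (-(b * h / d)) * |taylorR 3 x (x - h) z|
          + d / h ^ 2 * Bern (b * h / d) * |taylorR 3 x (x + h) z|
          ≤ C * h ^ 2 * (1 + d⁻¹ ^ 2 * Real.exp (-(b / d) * (1 - x))) := by
  refine ⟨(2 + b) * c₂ * Real.exp b, by positivity, ?_⟩
  rintro d ⟨hd0, hd1⟩ h hh0 hhd x ⟨hx1, hx2⟩ z hz hz4
  have hdne : d ≠ 0 := ne_of_gt hd0
  have hhne : h ≠ 0 := ne_of_gt hh0
  set P := b * h / d with hPdef
  have hP0 : 0 < P := by positivity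
  have hPb : P ≤ b := by
    rw [hPdef, div_le_iff₀ hd0]; nlinarith
  -- Bern bounds
  have hexpP : P + 1 ≤ Real.exp P := Real.add_one_le_exp P
  have he1 : 0 < Real.exp P - 1 := by nlinarith
  have hBP_pos : 0 ≤ Bern P := le_of_lt (div_pos hP0 he1)
  have hBP_le : Bern P ≤ 1 := by
    rw [Bern, div_le_one he1]; linarith
  have hen : Real.exp (-P) - 1 < 0 := by
    have := Real.exp_lt_one_iff.mpr (neg_lt_zero.mpr hP0)
    linarith
  have hBnP_pos : 0 ≤ Bern (-P) := by
    rw [Bern]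
    exact le_of_lt (div_pos_of_neg_of_neg (by linarith) hen)
  have huprod : Real.exp (-P) * Real.exp P = 1 := by
    rw [← Real.exp_add]; simp
  have hu : Real.exp (-P) * (1 + P) ≤ 1 := by
    nlinarith [Real.exp_pos (-P)]
  have hBnP_le : Bern (-P) ≤ 1 + b := by
    rw [Bern, div_le_iff_of_neg hen]
    nlinarith [mul_nonneg (sub_nonneg.mpr hPb)
      (sub_nonneg.mpr (le_of_lt (show Real.exp (-P) < 1 by linarith)))]
  -- bound on the fourth derivative near x
  set E := Real.exp (-(b / d) * (1 - x)) with hEdef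
  have hE0 : 0 < E := Real.exp_pos _
  set M := c₂ * (1 + d⁻¹ ^ 3 * (Real.exp b * E)) with hMdef
  have hM0 : 0 ≤ M := by rw [hMdef]; positivity
  have hzb : ∀ t, x - h ≤ t → t ≤ x + h → |iteratedDeriv 4 z t| ≤ M := by
    intro t h1 h2
    have ht0 : (0 : ℝ) ≤ t := by linarith
    have ht1 : t ≤ 1 := by linarith
    have hb4 := hz4 t ⟨ht0, ht1⟩
    have hexpb : Real.exp (-(b / d) * (1 - t)) ≤ Real.exp b * E := by
      rw [hEdef, ← Real.exp_add]
      apply Real.exp_le_exp.mpr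
      have htx : t - x ≤ d := by linarith
      have h4 : b / d * (t - x) ≤ b / d * d :=
        mul_le_mul_of_nonneg_left htx (by positivity)
      rw [div_mul_cancel₀ _ hdne] at h4
      nlinarith
    calc |iteratedDeriv 4 z t|
        ≤ c₂ * (1 + d⁻¹ ^ 3 * Real.exp (-(b / d) * (1 - t))) := hb4
      _ ≤ M := by rw [hMdef]; gcongr
  -- remainder bound
  have key : ∀ s : ℝ, |s| ≤ h → |taylorR 3 x (x + s) z| ≤ 1 / 6 * (h ^ 3 * M) * h := by
    intro s hs
    obtain ⟨hs1, hs2⟩ := abs_le.mp hs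
    have hbound : ∀ t ∈ Set.uIoc x (x + s),
        ‖(x + s - t) ^ 3 * iteratedDeriv (3 + 1) z t‖ ≤ h ^ 3 * M := by
      intro t ht
      rw [Set.mem_uIoc] at ht
      have ht1 : x - h ≤ t := by rcases ht with ⟨a, c⟩ | ⟨a, c⟩ <;> linarith
      have ht2 : t ≤ x + h := by rcases ht with ⟨a, c⟩ | ⟨a, c⟩ <;> linarith
      have ht3 : |x + s - t| ≤ h := by
        rw [abs_le]
        constructor <;> (rcases ht with ⟨a, c⟩ | ⟨a, c⟩ <;> linarith)
      rw [Real.norm_eq_abs, abs_mul, abs_pow]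
      exact mul_le_mul (pow_le_pow_left₀ (abs_nonneg _) ht3 3)
        (hzb t ht1 ht2) (abs_nonneg _) (by positivity)
    have hint := intervalIntegral.norm_integral_le_of_norm_le_const hbound
    rw [Real.norm_eq_abs] at hint
    have h2 : |x + s - x| ≤ h := by rw [show x + s - x = s by ring]; exact hs
    have hM3 : 0 ≤ h ^ 3 * M := by positivity
    calc |taylorR 3 x (x + s) z|
        = 1 / 6 * |∫ t in x..(x + s), (x + s - t) ^ 3 * iteratedDeriv (3 + 1) z t| := by
          rw [taylorR, abs_mul]
          norm_num [Nat.factorial]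
      _ ≤ 1 / 6 * ((h ^ 3 * M) * |x + s - x|) := by linarith
      _ ≤ 1 / 6 * (h ^ 3 * M) * h := by
          nlinarith [mul_le_mul_of_nonneg_left h2 hM3]
  have hxm : x - h = x + (-h) := by ring
  have hRm : |taylorR 3 x (x - h) z| ≤ 1 / 6 * (h ^ 3 * M) * h := by
    rw [hxm]; exact key (-h) (by rw [abs_neg, abs_of_pos hh0])
  have hRp : |taylorR 3 x (x + h) z| ≤ 1 / 6 * (h ^ 3 * M) * h :=
    key h (le_of_eq (abs_of_pos hh0))
  -- assemble
  have hdh2 : (0 : ℝ) ≤ d / h ^ 2 := by positivity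
  have t1 : d / h ^ 2 * Bern (-P) * |taylorR 3 x (x - h) z|
      ≤ d / h ^ 2 * ((1 + b) * (1 / 6 * (h ^ 3 * M) * h)) := by
    rw [mul_assoc]
    exact mul_le_mul_of_nonneg_left
      (mul_le_mul hBnP_le hRm (abs_nonneg _) (by linarith)) hdh2
  have t2 : d / h ^ 2 * Bern P * |taylorR 3 x (x + h) z|
      ≤ d / h ^ 2 * (1 * (1 / 6 * (h ^ 3 * M) * h)) := by
    rw [mul_assoc]
    exact mul_le_mul_of_nonneg_left
      (mul_le_mul hBP_le hRp (abs_nonneg _) (by norm_num)) hdh2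
  have hsum : d / h ^ 2 * ((1 + b) * (1 / 6 * (h ^ 3 * M) * h))
      + d / h ^ 2 * (1 * (1 / 6 * (h ^ 3 * M) * h))
      = (2 + b) / 6 * h ^ 2 * (d * M) := by
    field_simp
    ring
  have hdM : d * M ≤ c₂ * Real.exp b * (1 + d⁻¹ ^ 2 * E) := by
    have hd3 : d * d⁻¹ ^ 3 = d⁻¹ ^ 2 := by
      field_simp
    have hMexp : d * M = c₂ * (d + d⁻¹ ^ 2 * (Real.exp b * E)) := by
      rw [hMdef]
      rw [show d * (c₂ * (1 + d⁻¹ ^ 3 * (Real.exp b * E)))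
          = c₂ * (d + d * d⁻¹ ^ 3 * (Real.exp b * E)) by ring, hd3]
    rw [hMexp]
    have he1b : (1 : ℝ) ≤ Real.exp b := Real.one_le_exp hb.le
    calc c₂ * (d + d⁻¹ ^ 2 * (Real.exp b * E))
        ≤ c₂ * (Real.exp b + d⁻¹ ^ 2 * (Real.exp b * E)) := by
          apply mul_le_mul_of_nonneg_left _ hc₂.le
          exact add_le_add_left (hd1.trans he1b) _
      _ = c₂ * Real.exp b * (1 + d⁻¹ ^ 2 * E) := by ring
  have hfin : (2 + b) / 6 * h ^ 2 * (d * M)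
      ≤ (2 + b) * c₂ * Real.exp b * h ^ 2 * (1 + d⁻¹ ^ 2 * E) := by
    calc (2 + b) / 6 * h ^ 2 * (d * M)
        ≤ (2 + b) / 6 * h ^ 2 * (c₂ * Real.exp b * (1 + d⁻¹ ^ 2 * E)) := by
          exact mul_le_mul_of_nonneg_left hdM (by positivity)
      _ = (2 + b) * c₂ * Real.exp b * h ^ 2 * (1 + d⁻¹ ^ 2 * E) / 6 := by ring
      _ ≤ (2 + b) * c₂ * Real.exp b * h ^ 2 * (1 + d⁻¹ ^ 2 * E) := by
          have : (0 : ℝ) ≤ (2 + b) * c₂ * Real.exp b * h ^ 2 * (1 + d⁻¹ ^ 2 * E) := by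
            positivity
          linarith
  calc d / h ^ 2 * Bern (-P) * |taylorR 3 x (x - h) z|
      + d / h ^ 2 * Bern P * |taylorR 3 x (x + h) z|
      ≤ d / h ^ 2 * ((1 + b) * (1 / 6 * (h ^ 3 * M) * h))
        + d / h ^ 2 * (1 * (1 / 6 * (h ^ 3 * M) * h)) := add_le_add t1 t2
    _ = (2 + b) / 6 * h ^ 2 * (d * M) := hsum
    _ ≤ (2 + b) * c₂ * Real.exp b * h ^ 2 * (1 + d⁻¹ ^ 2 * E) := hfin
end

section
/- Remainder estimate in the coarse-mesh regime: define the Taylor remainder R_q(x₁, x₂; f) = (1/q!) ∫_{x₁}^{x₂} (x₂ − x)^q f^{(q+1)}(x) dx. Let b > 0 and c₂ > 0. Then there exists C > 0, depending only on b and c₂, such that for all d ∈ (0,1], all h with d ≤ h ≤ 1, all x ∈ [h, 1−h], and every function z ∈ C³([0,1]) with |z^{(3)}(t)| ≤ c₂ (1 + d⁻² exp(−b d⁻¹ (1 − t))) on [0,1], one has, with P = b h / d and B(z) = z/(e^z − 1): d h⁻² B(−P) |R₂(x, x − h; z)| ≤ C ( h² + d h⁻¹ exp(−b d⁻¹ (1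 − (x + h))) ). -/
private lemma aux_simp (b c K E d h : ℝ) (hd : d ≠ 0) (hh : h ≠ 0) :
    d / h ^ 2 * ((b * h / d) * K * (1 / 2 * (h ^ 2 * (c * (1 + d⁻¹ ^ 2 * E)) * h)))
      = (b * K * c / 2) * (h ^ 2 + h ^ 2 * d⁻¹ ^ 2 * E) := by
  field_simp

/-- remainder estimate in the coarse-mesh regime `d ≤ h ≤ 1`:
if `|z⁽³⁾(t)| ≤ c₂ (1 + d⁻² exp(−b d⁻¹ (1−t)))` on `[0,1]`, then
`d h⁻² B(−P) |R₂(x, x−h; z)| ≤ C (h² + d h⁻¹ exp(−b d⁻¹ (1−(x+h))))`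
with `C = C(b, c₂)`. -/
theorem remainder_estimate_coarse_mesh (b c₂ : ℝ) (hb : 0 < b) (hc₂ : 0 < c₂) :
    ∃ C > (0 : ℝ), ∀ d ∈ Set.Ioc (0 : ℝ) 1, ∀ h : ℝ, d ≤ h → h ≤ 1 →
      ∀ x ∈ Set.Icc h (1 - h), ∀ z : ℝ → ℝ, ContDiff ℝ 3 z →
        (∀ t ∈ Set.Icc (0 : ℝ) 1,
          |iteratedDeriv 3 z t| ≤ c₂ * (1 + d⁻¹ ^ 2 * Real.exp (-(b / d) * (1 - t)))) →
        d / h ^ 2 * Bern (-(b * h / d)) * |taylorR 2 x (x - h) z|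
          ≤ C * (h ^ 2 + d * h⁻¹ * Real.exp (-(b / d) * (1 - (x + h)))) := by
  have heb : Real.exp (-b) < 1 := by rw [Real.exp_lt_one_iff]; linarith
  set K : ℝ := (1 - Real.exp (-b))⁻¹ with hKdef
  have hK0 : 0 < K := inv_pos.2 (by linarith)
  refine ⟨(b * K * c₂ / 2) * (1 + 27 / b ^ 3), by positivity, ?_⟩
  rintro d ⟨hd0, hd1⟩ h hdh hh1 x ⟨hxl, hxr⟩ z hz hz3
  have h0 : 0 < h := lt_of_lt_of_le hd0 hdh
  set E : ℝ := Real.exp (-(b / d) * (1 - x)) with hEdef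
  set E' : ℝ := Real.exp (-(b / d) * (1 - (x + h))) with hE'def
  set Es : ℝ := Real.exp (-(b * h / d)) with hEsdef
  have hE0 : 0 < E := Real.exp_pos _
  have hE'0 : 0 < E' := Real.exp_pos _
  have hEs0 : 0 < Es := Real.exp_pos _
  have hEE : E = E' * Es := by
    rw [hEdef, hE'def, hEsdef, ← Real.exp_add]
    congr 1
    field_simp
    ring
  -- bound on the integrand
  have hbound : ∀ t ∈ Set.uIoc x (x - h),
      ‖(x - h - t) ^ 2 * iteratedDeriv (2 + 1) z t‖ ≤ h ^ 2 * (c₂ * (1 + d⁻¹ ^ 2 * E)) := by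
    intro t ht
    rw [Set.uIoc_comm, Set.uIoc_of_le (by linarith : x - h ≤ x)] at ht
    obtain ⟨ht1, ht2⟩ := ht
    have ht01 : t ∈ Set.Icc (0 : ℝ) 1 := ⟨by linarith, by linarith⟩
    have hz3t := hz3 t ht01
    have hsq : (x - h - t) ^ 2 ≤ h ^ 2 := by nlinarith
    have hexp : Real.exp (-(b / d) * (1 - t)) ≤ E := by
      rw [hEdef]
      apply Real.exp_le_exp.2
      have : 0 < b / d := div_pos hb hd0
      nlinarith
    have h1 : |iteratedDeriv (2 + 1) z t| ≤ c₂ * (1 + d⁻¹ ^ 2 * E) := by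
      refine hz3t.trans ?_
      gcongr
    rw [norm_mul, norm_pow]
    refine mul_le_mul ?_ h1 (abs_nonneg _) (by positivity)
    rwa [Real.norm_eq_abs, sq_abs]
  have hInt : ‖(∫ t in x..(x - h), (x - h - t) ^ 2 * iteratedDeriv (2 + 1) z t)‖
      ≤ h ^ 2 * (c₂ * (1 + d⁻¹ ^ 2 * E)) * |x - h - x| :=
    intervalIntegral.norm_integral_le_of_norm_le_const hbound
  have habs : |x - h - x| = h := by rw [abs_of_nonpos (by linarith)]; ring
  rw [habs] at hInt
  have hT : |taylorR 2 x (x - h) z| ≤ 1 / 2 * (h ^ 2 * (c₂ * (1 + d⁻¹ ^ 2 * E)) * h) := by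
    rw [taylorR]
    rw [abs_mul]
    have : |(1 : ℝ) / (Nat.factorial 2 : ℝ)| = 1 / 2 := by norm_num [Nat.factorial]
    rw [this]
    have := hInt
    rw [Real.norm_eq_abs] at this
    nlinarith
  -- Bernoulli bound
  have hsP : b ≤ b * h / d := by
    rw [le_div_iff₀ hd0]; nlinarith
  have hEsb : Es ≤ Real.exp (-b) := Real.exp_le_exp.2 (by linarith)
  have hden : 0 < 1 - Es := by linarith
  have hBernEq : Bern (-(b * h / d)) = (b * h / d) / (1 - Es) := by
    rw [Bern, hEsdef]
    rw [div_eq_div_iff (by linarith [Real.exp_pos (-(b*h/d))] : Real.exp (-(b*h/d)) - 1 ≠ 0) (by positivity)]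
    ring
  have hBern : Bern (-(b * h / d)) ≤ (b * h / d) * K := by
    rw [hBernEq, hKdef, ← div_eq_mul_inv]
    exact div_le_div_of_nonneg_left (by positivity) (by linarith) (by linarith)
  have hBern0 : 0 ≤ Bern (-(b * h / d)) := by
    rw [hBernEq]; positivity
  -- key exponential inequality: (h/d)^3 ≤ 27/b^3 * exp(b h/d)
  have hkey : h ^ 2 * d⁻¹ ^ 2 * Es ≤ 27 / b ^ 3 * (d * h⁻¹) := by
    have hs0 : 0 < b * h / d := by positivity
    have h1 : b * h / d / 3 ≤ Real.exp (b * h / d / 3) := by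
      have := Real.add_one_le_exp (b * h / d / 3); linarith
    have h2 : (b * h / d / 3) ^ 3 ≤ Real.exp (b * h / d) := by
      have hp : (b * h / d / 3) ^ 3 ≤ Real.exp (b * h / d / 3) ^ 3 :=
        pow_le_pow_left₀ (by positivity) h1 3
      have he : Real.exp (b * h / d / 3) ^ 3 = Real.exp (b * h / d) := by
        rw [← Real.exp_nat_mul]
        congr 1
        push_cast
        ring
      rw [he] at hp
      exact hp
    have hexp0 : 0 < Real.exp (b * h / d) := Real.exp_pos _
    have hEsval : Es = (Real.exp (b * h / d))⁻¹ := by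
      rw [hEsdef, ← Real.exp_neg]
    rw [hEsval, show h ^ 2 * d⁻¹ ^ 2 * (Real.exp (b * h / d))⁻¹
        = h ^ 2 / d ^ 2 / Real.exp (b * h / d) from by field_simp]
    rw [div_le_iff₀ hexp0]
    have hgoal : 27 / b ^ 3 * (d * h⁻¹) * ((b * h / d / 3) ^ 3) = h ^ 2 / d ^ 2 := by
      field_simp
      ring
    have hmul : 27 / b ^ 3 * (d * h⁻¹) * ((b * h / d / 3) ^ 3)
        ≤ 27 / b ^ 3 * (d * h⁻¹) * Real.exp (b * h / d) :=
      mul_le_mul_of_nonneg_left h2 (by positivity)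
    linarith
  clear_value K E E' Es
  -- combine
  have hmain : d / h ^ 2 * Bern (-(b * h / d)) * |taylorR 2 x (x - h) z|
      ≤ d / h ^ 2 * ((b * h / d) * K * (1 / 2 * (h ^ 2 * (c₂ * (1 + d⁻¹ ^ 2 * E)) * h))) := by
    rw [mul_assoc]
    apply mul_le_mul_of_nonneg_left _ (by positivity)
    exact mul_le_mul hBern hT (abs_nonneg _) (by positivity)
  refine hmain.trans ?_
  have hsimp := aux_simp b c₂ K E d h hd0.ne' h0.ne'
  rw [hsimp, hEE]
  have step : h ^ 2 * d⁻¹ ^ 2 * (E' * Es) ≤ 27 / b ^ 3 * (d * h⁻¹) * E' := by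
    have e1 : h ^ 2 * d⁻¹ ^ 2 * (E' * Es) = (h ^ 2 * d⁻¹ ^ 2 * Es) * E' := by ring
    rw [e1]
    exact mul_le_mul_of_nonneg_right hkey (le_of_lt hE'0)
  have hC0 : (0:ℝ) < b * K * c₂ / 2 := by positivity
  have hb3 : (0:ℝ) ≤ 27 / b ^ 3 := by positivity
  have hE'nn : (0:ℝ) ≤ d * h⁻¹ * E' := by positivity
  have expand : (1 + 27 / b ^ 3) * (h ^ 2 + d * h⁻¹ * E')
      = h ^ 2 + 27 / b ^ 3 * (d * h⁻¹) * E' + (27 / b ^ 3 * h ^ 2 + d * h⁻¹ * E') := by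
    ring
  have inner : h ^ 2 + h ^ 2 * d⁻¹ ^ 2 * (E' * Es) ≤ (1 + 27 / b ^ 3) * (h ^ 2 + d * h⁻¹ * E') := by
    rw [expand]
    have := mul_nonneg hb3 (sq_nonneg h)
    linarith
  refine le_trans (mul_le_mul_of_nonneg_left inner hC0.le) (le_of_eq (by ring))
end
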